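/- Let I be the left ideal generated by p in R<x,x*>, let p' be the leading (highest-degree homogeneous) part of p, and let p' = p_1 ... p_k be a factorization into irreducible homogeneous factors. If I is not real, then for some j in {1,...,k}, one of +(p_1 ... p_j + p_j* ... p_1*) or -(p_1 ... p_j + p_j* ... p_1*) is a sum of squares. -/

import Mathlib

open scoped BigOperators

noncomputable section

/-- The free real *-algebra on `g` variables `x₁,…,x_g` and their formal adjoints
`x₁*,…,x_g*`, modeled as the monoid algebra of the free monoid on `2g` letters,
where `Sum.inl i` is `xᵢ` and `Sum.inr i` is `xᵢ*`. -/
abbrev FreeStarAlg (g : ℕ) := MonoidAlgebra ℝ (FreeMonoid (Fin g ⊕ Fin g))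

namespace FreeStarAlg

variable {g : ℕ}

/-- The involution on words: reverse the word and star each letter. -/
def starWord (w : FreeMonoid (Fin g ⊕ Fin g)) : FreeMonoid (Fin g ⊕ Fin g) :=
  FreeMonoid.ofList (((FreeMonoid.toList w).map Sum.swap).reverse)

/-- The involution `p ↦ p*` on the free *-algebra. -/
def starP (p : FreeStarAlg g) : FreeStarAlg g :=
  MonoidAlgebra.ofCoeff (Finsupp.mapDomain starWord p.coeff)

/-- The monomial corresponding to a word. -/
def mono (w : FreeMonoid (Fin g ⊕ Fin g)) : FreeStarAlg g :=
  MonoidAlgebra.single w 1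

/-- Degree of a noncommutative polynomial. -/
def deg (p : FreeStarAlg g) : ℕ :=
  p.coeff.support.sup fun w => (FreeMonoid.toList w).length

/-- `p` is homogeneous of degree `d`: every word appearing in `p` has length `d`. -/
def IsHom (d : ℕ) (p : FreeStarAlg g) : Prop :=
  ∀ w ∈ p.coeff.support, (FreeMonoid.toList w).length = d

/-- `p` is a (finite) sum of hermitian squares `qᵢ* qᵢ`. -/
def IsSOS (p : FreeStarAlg g) : Prop :=
  ∃ (k : ℕ) (q : Fin k → FreeStarAlg g), p = ∑ i, starP (q i) * q i

/-- Membership in `I + I*`. -/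
def MemIplusIstar (I : Submodule (FreeStarAlg g) (FreeStarAlg g)) (p : FreeStarAlg g) : Prop :=
  ∃ u ∈ I, ∃ v ∈ I, p = u + starP v

/-- A left ideal `I` is real if `∑ aᵢ* aᵢ ∈ I + I*` forces every `aᵢ ∈ I`. -/
def IsRealIdeal (I : Submodule (FreeStarAlg g) (FreeStarAlg g)) : Prop :=
  ∀ (r : ℕ) (a : Fin r → FreeStarAlg g),
    MemIplusIstar I (∑ i, starP (a i) * a i) → ∀ i, a i ∈ I

/-- The left ideal generated by a set `S`. -/
def leftIdealGen (S : Set (FreeStarAlg g)) : Submodule (FreeStarAlg g) (FreeStarAlg g) :=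
  Submodule.span (FreeStarAlg g) S

/-- `p` is irreducible: it cannot be written as a product of two polynomials of
strictly smaller degree. -/
def Irred (p : FreeStarAlg g) : Prop :=
  ¬ ∃ q r : FreeStarAlg g, p = q * r ∧ deg q < deg p ∧ deg r < deg p

/-- `p` is analytic: it contains no starred variables. -/
def IsAnalytic (p : FreeStarAlg g) : Prop :=
  ∀ w ∈ p.coeff.support, ∀ l ∈ FreeMonoid.toList w, l.isLeft

end FreeStarAlg

namespace FreeStarAlg

variable {g : ℕ}

local instance : DecidableEq (FreeMonoid (Fin g ⊕ Fin g)) := Classical.decEq _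

/-! ### Words -/

abbrev Wd (g : ℕ) := FreeMonoid (Fin g ⊕ Fin g)

instance : CoeFun (FreeStarAlg g) (fun _ => Wd g → ℝ) := ⟨fun f => f.coeff⟩

lemma fadd_apply (f h : FreeStarAlg g) (w : Wd g) : (f + h) w = f w + h w := rfl
lemma fsub_apply (f h : FreeStarAlg g) (w : Wd g) : (f - h) w = f w - h w := rfl
lemma fneg_apply (f : FreeStarAlg g) (w : Wd g) : (-f) w = - f w := rfl
lemma fsmul_apply (r : ℝ) (f : FreeStarAlg g) (w : Wd g) : (r • f) w = r • f w := rfl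
lemma fzero_apply (w : Wd g) : (0 : FreeStarAlg g) w = 0 := rfl
lemma ffinset_sum_apply {α : Type*} (s : Finset α) (F : α → FreeStarAlg g) (w : Wd g) :
    (∑ i ∈ s, F i) w = ∑ i ∈ s, F i w := by
  rw [MonoidAlgebra.coeff_sum, Finsupp.finset_sum_apply]

def len (w : Wd g) : ℕ := (FreeMonoid.toList w).length

def wtake (k : ℕ) (w : Wd g) : Wd g := FreeMonoid.ofList ((FreeMonoid.toList w).take k)
def wdrop (k : ℕ) (w : Wd g) : Wd g := FreeMonoid.ofList ((FreeMonoid.toList w).drop k)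

@[simp] lemma len_mul (u v : Wd g) : len (u * v) = len u + len v := by
  simp [len, FreeMonoid.toList_mul]

@[simp] lemma len_one : len (1 : Wd g) = 0 := rfl

lemma wtake_mul_wdrop (k : ℕ) (w : Wd g) : wtake k w * wdrop k w = w := by
  apply FreeMonoid.toList.injective
  simp [wtake, wdrop, FreeMonoid.toList_mul]

lemma len_wtake (k : ℕ) (w : Wd g) : len (wtake k w) = min k (len w) := by
  simp [wtake, len]

lemma len_wdrop (k : ℕ) (w : Wd g) : len (wdrop k w) = len w - k := by
  simp [wdrop, len]

lemma wtake_of_mul (u v : Wd g) : wtake (len u) (u * v) = u := by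
  apply FreeMonoid.toList.injective
  simp [wtake, len, FreeMonoid.toList_mul, List.take_append]

lemma wdrop_of_mul (u v : Wd g) : wdrop (len u) (u * v) = v := by
  apply FreeMonoid.toList.injective
  simp [wdrop, len, FreeMonoid.toList_mul, List.drop_append]

lemma mul_left_cancel_word {u v v' : Wd g} (h : u * v = u * v') : v = v' := by
  have := congrArg (wdrop (len u)) h
  rwa [wdrop_of_mul, wdrop_of_mul] at this

/-! ### starWord -/

@[simp] lemma len_starWord (w : Wd g) : len (starWord w) = len w := by
  simp [starWord, len]

lemma starWord_mul (u v : Wd g) : starWord (u * v) = starWord v * starWord u := by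
  apply FreeMonoid.toList.injective
  simp [starWord, FreeMonoid.toList_mul]

@[simp] lemma starWord_starWord (w : Wd g) : starWord (starWord w) = w := by
  apply FreeMonoid.toList.injective
  simp [starWord, List.map_reverse, Function.comp]

lemma starWord_injective : Function.Injective (starWord (g := g)) :=
  Function.LeftInverse.injective starWord_starWord

/-! ### starP basics -/

lemma starP_apply (f : FreeStarAlg g) (w : Wd g) : starP f w = f (starWord w) := by
  have := Finsupp.mapDomain_apply starWord_injective f.coeff (starWord w)
  rwa [starWord_starWord] at this

@[simp] lemma starP_zero : starP (0 : FreeStarAlg g) = 0 := congrArg MonoidAlgebra.ofCoeff Finsupp.mapDomain_zero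

lemma starP_add (f h : FreeStarAlg g) : starP (f + h) = starP f + starP h :=
  congrArg MonoidAlgebra.ofCoeff Finsupp.mapDomain_add

lemma starP_neg (f : FreeStarAlg g) : starP (-f) = - starP f := by
  ext w; rw [fneg_apply, starP_apply, starP_apply, fneg_apply]

lemma starP_sub (f h : FreeStarAlg g) : starP (f - h) = starP f - starP h := by
  ext w; rw [fsub_apply, starP_apply, starP_apply, starP_apply, fsub_apply]

lemma starP_smul (r : ℝ) (f : FreeStarAlg g) : starP (r • f) = r • starP f := by
  ext w; rw [fsmul_apply, starP_apply, starP_apply, fsmul_apply]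

@[simp] lemma starP_starP (f : FreeStarAlg g) : starP (starP f) = f := by
  ext w; simp [starP_apply]

lemma starP_eq_zero_iff {f : FreeStarAlg g} : starP f = 0 ↔ f = 0 := by
  constructor
  · intro h; have := congrArg starP h; simpa using this
  · rintro rfl; simp

lemma starP_single (w : Wd g) (r : ℝ) :
    starP (MonoidAlgebra.single w r) = MonoidAlgebra.single (starWord w) r :=
  congrArg MonoidAlgebra.ofCoeff Finsupp.mapDomain_single

lemma starP_mul (f h : FreeStarAlg g) : starP (f * h) = starP h * starP f := by
  induction f using MonoidAlgebra.induction_linear with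
  | zero => simp
  | add a b ha hb => rw [add_mul, starP_add, ha, hb, starP_add, mul_add]
  | single w r =>
    induction h using MonoidAlgebra.induction_linear with
    | zero => simp
    | add a b ha hb => rw [mul_add, starP_add, ha, hb, starP_add, add_mul]
    | single v s =>
      rw [MonoidAlgebra.single_mul_single, starP_single, starP_single, starP_single,
        MonoidAlgebra.single_mul_single, starWord_mul, mul_comm]

lemma starP_sum {α : Type*} (s : Finset α) (f : α → FreeStarAlg g) :
    starP (∑ i ∈ s, f i) = ∑ i ∈ s, starP (f i) := by
  classical
  induction s using Finset.induction with
  | empty => simp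
  | insert _ _ h ih => rw [Finset.sum_insert h, starP_add, ih, Finset.sum_insert h]

lemma isHom_starP {d : ℕ} {f : FreeStarAlg g} (hf : IsHom d f) : IsHom d (starP f) := by
  intro w hw
  have : starP f w ≠ 0 := Finsupp.mem_support_iff.mp hw
  rw [starP_apply] at this
  have := hf _ (Finsupp.mem_support_iff.mpr this)
  have h2 : len (starWord w) = len w := len_starWord w
  simp only [len] at h2
  omega

end FreeStarAlg

namespace FreeStarAlg

variable {g : ℕ}

/-! ### Degree bounds and coefficients of products -/

def degLE (f : FreeStarAlg g) (N : ℕ) : Prop := ∀ w ∈ f.coeff.support, len w ≤ N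

lemma degLE_deg (f : FreeStarAlg g) : degLE f (deg f) := fun w hw => Finset.le_sup hw

lemma deg_le_of_degLE {f : FreeStarAlg g} {N : ℕ} (h : degLE f N) : deg f ≤ N :=
  Finset.sup_le h

lemma IsHom.degLE' {d : ℕ} {f : FreeStarAlg g} (hf : IsHom d f) : degLE f d :=
  fun w hw => (hf w hw).le

lemma apply_eq_zero_of_degLE {f : FreeStarAlg g} {N : ℕ} (h : degLE f N) {w : Wd g}
    (hw : N < len w) : f w = 0 := by
  by_contra hne
  exact absurd (h w (Finsupp.mem_support_iff.mpr hne)) (by omega)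

lemma IsHom.apply_ne {d : ℕ} {f : FreeStarAlg g} (hf : IsHom d f) {w : Wd g}
    (hw : len w ≠ d) : f w = 0 := by
  by_contra hne
  exact hw (hf w (Finsupp.mem_support_iff.mpr hne))

lemma exists_word_deg {f : FreeStarAlg g} (hf : f ≠ 0) :
    ∃ w ∈ f.coeff.support, len w = deg f := by
  obtain ⟨w, hw, he⟩ := Finset.exists_mem_eq_sup f.coeff.support
    (Finsupp.support_nonempty_iff.mpr (MonoidAlgebra.coeff_eq_zero.not.mpr hf)) (fun w => (FreeMonoid.toList w).length)
  exact ⟨w, hw, he.symm⟩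

lemma coeff_mul (f h : FreeStarAlg g) (w : Wd g) :
    (f * h) w = ∑ k ∈ Finset.range (len w + 1), f (wtake k w) * h (wdrop k w) := by
  classical
  induction f using MonoidAlgebra.induction_linear with
  | zero => simp
  | add f₁ f₂ h₁ h₂ =>
      rw [add_mul, fadd_apply, h₁, h₂, ← Finset.sum_add_distrib]
      exact Finset.sum_congr rfl (fun k _ => by rw [fadd_apply, add_mul])
  | single a r =>
    induction h using MonoidAlgebra.induction_linear with
    | zero => simp
    | add h₁ h₂ ih₁ ih₂ =>
        rw [mul_add, fadd_apply, ih₁, ih₂, ← Finset.sum_add_distrib]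
        exact Finset.sum_congr rfl (fun k _ => by rw [fadd_apply, mul_add])
    | single b s =>
        rw [MonoidAlgebra.single_mul_single]
        by_cases hw : a * b = w
        · subst hw
          rw [Finset.sum_eq_single (len a)]
          · rw [wtake_of_mul, wdrop_of_mul]
            simp [MonoidAlgebra.single_apply]
          · intro k hk hka
            rw [Finset.mem_range] at hk
            have hlen : len (wtake k (a * b)) = k := by
              rw [len_wtake]; rw [len_mul] at hk ⊢; omega
            have : wtake k (a * b) ≠ a := fun he => hka (by rw [← he, hlen])
            rw [MonoidAlgebra.single_apply, if_neg (fun he => this he.symm), zero_mul]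
          · intro hmem
            exact absurd (Finset.mem_range.mpr (by rw [len_mul]; omega)) hmem
        · rw [MonoidAlgebra.single_apply, if_neg hw]
          symm; apply Finset.sum_eq_zero
          intro k hk
          by_cases h1 : wtake k w = a
          · by_cases h2 : wdrop k w = b
            · exact absurd (by rw [← h1, ← h2, wtake_mul_wdrop]) hw
            · rw [MonoidAlgebra.single_apply (a := b), if_neg (fun he => h2 he.symm), mul_zero]
          · rw [MonoidAlgebra.single_apply (a := a), if_neg (fun he => h1 he.symm), zero_mul]

lemma coeff_mul_of_degLE {a b : ℕ} {f h : FreeStarAlg g} (hf : degLE f a) (hh : degLE h b)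
    {w : Wd g} (hw : len w = a + b) :
    (f * h) w = f (wtake a w) * h (wdrop a w) := by
  rw [coeff_mul]
  rw [Finset.sum_eq_single a]
  · intro k hk hka
    rw [Finset.mem_range] at hk
    rcases lt_or_gt_of_ne hka with hlt | hgt
    · have : b < len (wdrop k w) := by rw [len_wdrop]; omega
      rw [apply_eq_zero_of_degLE hh this, mul_zero]
    · have : a < len (wtake k w) := by rw [len_wtake]; omega
      rw [apply_eq_zero_of_degLE hf this, zero_mul]
  · intro hmem
    exact absurd (Finset.mem_range.mpr (by omega)) hmem

lemma coeff_mul_words {a b : ℕ} {f h : FreeStarAlg g} (hf : degLE f a) (hh : degLE h b)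
    {u v : Wd g} (hu : len u = a) (hv : len v = b) :
    (f * h) (u * v) = f u * h v := by
  rw [coeff_mul_of_degLE hf hh (by rw [len_mul, hu, hv]), ← hu, wtake_of_mul, wdrop_of_mul]

lemma degLE_mul {a b : ℕ} {f h : FreeStarAlg g} (hf : degLE f a) (hh : degLE h b) :
    degLE (f * h) (a + b) := by
  intro w hw
  classical
  have := MonoidAlgebra.support_coeff_mul_subset f h hw
  obtain ⟨u, hu, v, hv, hmem⟩ := Finset.mem_mul.mp this
  subst hmem
  rw [len_mul]
  exact add_le_add (hf u hu) (hh v hv)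

lemma isHom_mul {a b : ℕ} {f h : FreeStarAlg g} (hf : IsHom a f) (hh : IsHom b h) :
    IsHom (a + b) (f * h) := by
  intro w hw
  classical
  have := MonoidAlgebra.support_coeff_mul_subset f h hw
  obtain ⟨u, hu, v, hv, hmem⟩ := Finset.mem_mul.mp this
  subst hmem
  have h1 := hf u hu; have h2 := hh v hv
  have := len_mul u v
  simp only [len] at *
  omega

lemma isHom_add {d : ℕ} {f h : FreeStarAlg g} (hf : IsHom d f) (hh : IsHom d h) :
    IsHom d (f + h) := by
  intro w hw
  have : f w + h w ≠ 0 := by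
    have := Finsupp.mem_support_iff.mp hw; rwa [fadd_apply] at this
  by_cases h1 : f w = 0
  · exact hh w (Finsupp.mem_support_iff.mpr (by intro h2; rw [h1, h2, add_zero] at this; exact this rfl))
  · exact hf w (Finsupp.mem_support_iff.mpr h1)

lemma isHom_smul {d : ℕ} {f : FreeStarAlg g} (hf : IsHom d f) (r : ℝ) : IsHom d (r • f) := by
  intro w hw
  apply hf
  rw [Finsupp.mem_support_iff] at hw ⊢
  intro h; rw [fsmul_apply] at hw; rw [h] at hw; simp at hw

lemma isHom_neg {d : ℕ} {f : FreeStarAlg g} (hf : IsHom d f) : IsHom d (-f) := by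
  have := isHom_smul hf (-1); rwa [neg_one_smul] at this

lemma hom_mul_ne_zero {a b : ℕ} {f h : FreeStarAlg g} (hf : IsHom a f) (hh : IsHom b h)
    (hf0 : f ≠ 0) (hh0 : h ≠ 0) : f * h ≠ 0 := by
  obtain ⟨u, hu, _⟩ := exists_word_deg hf0
  obtain ⟨v, hv, _⟩ := exists_word_deg hh0
  intro hcon
  have heq : f u * h v = 0 := by
    rw [← coeff_mul_words hf.degLE' hh.degLE' (hf u hu) (hh v hv), hcon]
    simp
  rcases mul_eq_zero.mp heq with h1 | h1
  · exact Finsupp.mem_support_iff.mp hu h1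
  · exact Finsupp.mem_support_iff.mp hv h1

lemma coeff_mul_homleft {a : ℕ} {f : FreeStarAlg g} (hf : IsHom a f) (X : FreeStarAlg g)
    {w : Wd g} (hw : a ≤ len w) :
    (f * X) w = f (wtake a w) * X (wdrop a w) := by
  rw [coeff_mul]
  rw [Finset.sum_eq_single a]
  · intro k hk hka
    rw [Finset.mem_range] at hk
    have : len (wtake k w) = k := by rw [len_wtake]; omega
    rw [hf.apply_ne (by omega), zero_mul]
  · intro hmem
    exact absurd (Finset.mem_range.mpr (by omega)) hmem

lemma coeff_mul_homright {b : ℕ} {f : FreeStarAlg g} (hf : IsHom b f) (X : FreeStarAlg g)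
    {w : Wd g} (hw : b ≤ len w) :
    (X * f) w = X (wtake (len w - b) w) * f (wdrop (len w - b) w) := by
  rw [coeff_mul]
  rw [Finset.sum_eq_single (len w - b)]
  · intro k hk hka
    rw [Finset.mem_range] at hk
    have hd : len (wdrop k w) = len w - k := by rw [len_wdrop]
    rw [hf.apply_ne (show len (wdrop k w) ≠ b by rw [hd]; omega), mul_zero]
  · intro hmem
    exact absurd (Finset.mem_range.mpr (by omega)) hmem

lemma hom_mul_left_cancel₀ {a : ℕ} {f X : FreeStarAlg g} (hf : IsHom a f) (hf0 : f ≠ 0)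
    (h : f * X = 0) : X = 0 := by
  obtain ⟨x₀, hx₀, _⟩ := exists_word_deg hf0
  have hx₀len := hf x₀ hx₀
  ext y
  have hle : a ≤ len (x₀ * y) := by rw [len_mul]; change len x₀ = a at hx₀len; omega
  have := coeff_mul_homleft hf X hle
  rw [h] at this
  have h1 : wtake a (x₀ * y) = x₀ := by
    rw [show a = len x₀ from hx₀len.symm, wtake_of_mul]
  have h2 : wdrop a (x₀ * y) = y := by
    rw [show a = len x₀ from hx₀len.symm, wdrop_of_mul]
  rw [h1, h2] at this
  simp only [fzero_apply, Finsupp.coe_zero, Pi.zero_apply] at this ⊢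
  rcases mul_eq_zero.mp this.symm with h1 | h1
  · exact absurd h1 (Finsupp.mem_support_iff.mp hx₀)
  · exact h1

lemma hom_mul_right_cancel₀ {b : ℕ} {f X : FreeStarAlg g} (hf : IsHom b f) (hf0 : f ≠ 0)
    (h : X * f = 0) : X = 0 := by
  obtain ⟨x₀, hx₀, _⟩ := exists_word_deg hf0
  have hx₀len := hf x₀ hx₀
  ext y
  have hlen : len (y * x₀) = len y + b := by rw [len_mul]; change len x₀ = b at hx₀len; omega
  have hle : b ≤ len (y * x₀) := by omega
  have := coeff_mul_homright hf X hle
  rw [h] at this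
  have hsub : len (y * x₀) - b = len y := by omega
  have h1 : wtake (len (y * x₀) - b) (y * x₀) = y := by rw [hsub, wtake_of_mul]
  have h2 : wdrop (len (y * x₀) - b) (y * x₀) = x₀ := by rw [hsub, wdrop_of_mul]
  rw [h1, h2] at this
  simp only [fzero_apply, Finsupp.coe_zero, Pi.zero_apply] at this ⊢
  rcases mul_eq_zero.mp this.symm with h1 | h1
  · exact h1
  · exact absurd h1 (Finsupp.mem_support_iff.mp hx₀)

lemma deg_of_isHom {d : ℕ} {f : FreeStarAlg g} (hf : IsHom d f) (h0 : f ≠ 0) : deg f = d := by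
  obtain ⟨w, hw, he⟩ := exists_word_deg h0
  rw [← he]; exact hf w hw

end FreeStarAlg
namespace FreeStarAlg

variable {g : ℕ}

local instance : DecidableEq (FreeMonoid (Fin g ⊕ Fin g)) := Classical.decEq _

/-! ### The coefficient pairing -/

def pair (f h : FreeStarAlg g) : ℝ := ∑ w ∈ f.coeff.support ∪ h.coeff.support, f w * h w

lemma pair_comm (f h : FreeStarAlg g) : pair f h = pair h f := by
  rw [pair, pair, Finset.union_comm]
  exact Finset.sum_congr rfl (fun w _ => mul_comm _ _)

lemma pair_eq_sum_left (f h : FreeStarAlg g) : pair f h = ∑ w ∈ f.coeff.support, f w * h w := by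
  rw [pair]
  symm
  apply Finset.sum_subset (Finset.subset_union_left)
  intro w _ hw
  rw [Finsupp.notMem_support_iff.mp hw, zero_mul]

lemma pair_eq_sum_right (f h : FreeStarAlg g) : pair f h = ∑ w ∈ h.coeff.support, f w * h w := by
  rw [pair_comm, pair_eq_sum_left]
  exact Finset.sum_congr rfl (fun w _ => mul_comm _ _)

lemma pair_eq_sum_sup (f h : FreeStarAlg g) {s : Finset (Wd g)} (hs : f.coeff.support ⊆ s) :
    pair f h = ∑ w ∈ s, f w * h w := by
  rw [pair_eq_sum_left]
  apply Finset.sum_subset hs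
  intro w _ hw
  rw [Finsupp.notMem_support_iff.mp hw, zero_mul]

lemma pair_congr_left {f₁ f₂ h : FreeStarAlg g} (hc : ∀ w ∈ h.coeff.support, f₁ w = f₂ w) :
    pair f₁ h = pair f₂ h := by
  rw [pair_eq_sum_right, pair_eq_sum_right]
  exact Finset.sum_congr rfl (fun w hw => by rw [hc w hw])

lemma pair_add_left (f₁ f₂ h : FreeStarAlg g) :
    pair (f₁ + f₂) h = pair f₁ h + pair f₂ h := by
  rw [pair_eq_sum_right, pair_eq_sum_right, pair_eq_sum_right, ← Finset.sum_add_distrib]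
  exact Finset.sum_congr rfl (fun w _ => by rw [fadd_apply, add_mul])

lemma pair_add_right (f h₁ h₂ : FreeStarAlg g) :
    pair f (h₁ + h₂) = pair f h₁ + pair f h₂ := by
  rw [pair_comm, pair_add_left, pair_comm h₁, pair_comm h₂]

lemma pair_smul_left (r : ℝ) (f h : FreeStarAlg g) : pair (r • f) h = r * pair f h := by
  rw [pair_eq_sum_right, pair_eq_sum_right, Finset.mul_sum]
  exact Finset.sum_congr rfl (fun w _ => by rw [fsmul_apply, smul_eq_mul]; ring)

lemma pair_smul_right (r : ℝ) (f h : FreeStarAlg g) : pair f (r • h) = r * pair f h := by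
  rw [pair_comm, pair_smul_left, pair_comm]

@[simp] lemma pair_zero_left (h : FreeStarAlg g) : pair 0 h = 0 := by
  rw [pair_eq_sum_left]; simp

@[simp] lemma pair_zero_right (f : FreeStarAlg g) : pair f 0 = 0 := by
  rw [pair_comm]; simp

lemma pair_sum_left {α : Type*} (s : Finset α) (F : α → FreeStarAlg g) (h : FreeStarAlg g) :
    pair (∑ i ∈ s, F i) h = ∑ i ∈ s, pair (F i) h := by
  classical
  induction s using Finset.induction with
  | empty => simp
  | insert _ _ hmem ih => rw [Finset.sum_insert hmem, pair_add_left, ih, Finset.sum_insert hmem]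

lemma pair_self_nonneg (f : FreeStarAlg g) : 0 ≤ pair f f := by
  rw [pair_eq_sum_left]
  exact Finset.sum_nonneg (fun w _ => mul_self_nonneg _)

lemma pair_self_pos {f : FreeStarAlg g} (hf : f ≠ 0) : 0 < pair f f := by
  rw [pair_eq_sum_left]
  obtain ⟨w, hw⟩ := Finsupp.support_nonempty_iff.mpr (MonoidAlgebra.coeff_eq_zero.not.mpr hf)
  apply Finset.sum_pos' (fun w _ => mul_self_nonneg _)
  exact ⟨w, hw, mul_self_pos.mpr (Finsupp.mem_support_iff.mp hw)⟩

lemma pair_self_eq_zero {f : FreeStarAlg g} (h : pair f f = 0) : f = 0 := by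
  by_contra h0
  exact absurd h (ne_of_gt (pair_self_pos h0))

lemma support_starP (f : FreeStarAlg g) :
    (starP f).coeff.support = f.coeff.support.image starWord := by
  ext w
  rw [Finset.mem_image, Finsupp.mem_support_iff, starP_apply]
  constructor
  · intro h
    exact ⟨starWord w, Finsupp.mem_support_iff.mpr h, starWord_starWord w⟩
  · rintro ⟨v, hv, rfl⟩
    rwa [starWord_starWord, ← Finsupp.mem_support_iff]

lemma pair_starP_starP (f h : FreeStarAlg g) : pair (starP f) (starP h) = pair f h := by
  rw [pair_eq_sum_left (starP f), support_starP,
    Finset.sum_image (fun x _ y _ hxy => starWord_injective hxy), pair_eq_sum_left]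
  exact Finset.sum_congr rfl (fun w _ => by simp [starP_apply])

lemma pair_starP_left (f h : FreeStarAlg g) : pair (starP f) h = pair f (starP h) := by
  conv_lhs => rw [show h = starP (starP h) from (starP_starP h).symm]
  rw [pair_starP_starP]

/-! ### pairing of products of homogeneous elements -/

lemma pair_mul_mul {a b : ℕ} {f h X Y : FreeStarAlg g}
    (hf : IsHom a f) (hh : IsHom b h) (hX : IsHom a X) (hY : IsHom b Y) :
    pair (f * h) (X * Y) = pair f X * pair h Y := by
  classical
  have hfX : IsHom a (f + X) := isHom_add hf hX
  have hhY : IsHom b (h + Y) := isHom_add hh hY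
  set T := (f.coeff.support ∪ X.coeff.support) ×ˢ (h.coeff.support ∪ Y.coeff.support) with hT
  have hinj : ∀ q ∈ T, ∀ q' ∈ T, q.1 * q.2 = q'.1 * q'.2 → q = q' := by
    rintro ⟨u, v⟩ hq ⟨u', v'⟩ hq' he
    rw [hT, Finset.mem_product] at hq hq'
    have hu : len u = a := by
      rcases Finset.mem_union.mp hq.1 with h' | h'
      exacts [hf u h', hX u h']
    have hu' : len u' = a := by
      rcases Finset.mem_union.mp hq'.1 with h' | h'
      exacts [hf u' h', hX u' h']
    have h1 : u = u' := by
      have := congrArg (wtake a) he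
      rwa [← hu, wtake_of_mul, hu, ← hu', wtake_of_mul (v := v')] at this
    subst h1
    have h2 : v = v' := mul_left_cancel_word he
    simp [h2]
  have key : ∑ q ∈ T, (f q.1 * X q.1) * (h q.2 * Y q.2)
      = ∑ w ∈ T.image (fun q => q.1 * q.2), (f * h) w * (X * Y) w := by
    rw [Finset.sum_image hinj]
    apply Finset.sum_congr rfl
    rintro ⟨u, v⟩ hq
    rw [hT, Finset.mem_product] at hq
    have hu : len u = a := by
      rcases Finset.mem_union.mp hq.1 with h' | h'
      exacts [hf u h', hX u h']
    have hv : len v = b := by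
      rcases Finset.mem_union.mp hq.2 with h' | h'
      exacts [hh v h', hY v h']
    rw [coeff_mul_words hf.degLE' hh.degLE' hu hv, coeff_mul_words hX.degLE' hY.degLE' hu hv]
    ring
  have lhs_eq : pair (f * h) (X * Y) = ∑ w ∈ T.image (fun q => q.1 * q.2), (f * h) w * (X * Y) w := by
    rw [pair]
    apply Finset.sum_subset
    · intro w hw
      rcases Finset.mem_union.mp hw with hw' | hw'
      · obtain ⟨u, hu, v, hv, rfl⟩ := Finset.mem_mul.mp (MonoidAlgebra.support_coeff_mul_subset f h hw')
        exact Finset.mem_image.mpr ⟨(u, v), Finset.mem_product.mpr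
          ⟨Finset.mem_union_left _ hu, Finset.mem_union_left _ hv⟩, rfl⟩
      · obtain ⟨u, hu, v, hv, rfl⟩ := Finset.mem_mul.mp (MonoidAlgebra.support_coeff_mul_subset X Y hw')
        exact Finset.mem_image.mpr ⟨(u, v), Finset.mem_product.mpr
          ⟨Finset.mem_union_right _ hu, Finset.mem_union_right _ hv⟩, rfl⟩
    · intro w _ hw
      rw [Finset.mem_union] at hw
      push_neg at hw
      rw [Finsupp.notMem_support_iff.mp hw.1, zero_mul]
  rw [lhs_eq, ← key, pair, pair, Finset.sum_mul_sum, hT, Finset.sum_product]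

/-! ### pairing against a translated polynomial -/

lemma single_one_mul (w : Wd g) (ψ : FreeStarAlg g) :
    MonoidAlgebra.single w (1:ℝ) * ψ = MonoidAlgebra.ofCoeff (Finsupp.mapDomain (fun h => w * h) ψ.coeff) := by
  induction ψ using MonoidAlgebra.induction_linear with
  | zero => simp
  | add a b ha hb => rw [mul_add, ha, hb, MonoidAlgebra.coeff_add, Finsupp.mapDomain_add, MonoidAlgebra.ofCoeff_add]
  | single v s => rw [MonoidAlgebra.single_mul_single, one_mul, MonoidAlgebra.coeff_single, Finsupp.mapDomain_single, MonoidAlgebra.ofCoeff_single]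

lemma pair_mapDomain_right (f ψ : FreeStarAlg g) {ι : Wd g → Wd g} (hι : Function.Injective ι) :
    pair f (MonoidAlgebra.ofCoeff (Finsupp.mapDomain ι ψ.coeff)) = ∑ h ∈ ψ.coeff.support, f (ι h) * ψ h := by
  rw [pair_eq_sum_right, Finsupp.mapDomain_support_of_injective hι,
    Finset.sum_image (fun x _ y _ hxy => hι hxy)]
  exact Finset.sum_congr rfl (fun h _ => by rw [Finsupp.mapDomain_apply hι])

lemma mul_word_left_injective (w : Wd g) : Function.Injective (fun h : Wd g => w * h) :=
  fun _ _ he => mul_left_cancel_word he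

/-- Left cut: `(lcut w f) h = f (w * h)`. -/
def lcut (w : Wd g) (f : FreeStarAlg g) : FreeStarAlg g :=
  MonoidAlgebra.ofCoeff <| Finsupp.comapDomain (fun h => w * h) f.coeff ((mul_word_left_injective w).injOn)

lemma lcut_apply' (w : Wd g) (f : FreeStarAlg g) (h : Wd g) : lcut w f h = f (w * h) :=
  Finsupp.comapDomain_apply _ _ _ _

lemma pair_single_mul (f ψ : FreeStarAlg g) (w : Wd g) :
    pair f (MonoidAlgebra.single w 1 * ψ) = pair (lcut w f) ψ := by
  rw [single_one_mul, pair_mapDomain_right f ψ (mul_word_left_injective w),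
    pair_eq_sum_right]
  exact Finset.sum_congr rfl (fun h _ => by rw [lcut_apply'])

lemma isHom_lcut {k n' : ℕ} {f : FreeStarAlg g} (hf : IsHom (k + n') f) {w : Wd g}
    (hw : len w = k) : IsHom n' (lcut w f) := by
  intro h hmem
  have : f (w * h) ≠ 0 := by
    have := Finsupp.mem_support_iff.mp hmem
    rwa [lcut_apply'] at this
  have hlen := hf _ (Finsupp.mem_support_iff.mpr this)
  have := len_mul w h
  simp only [len] at *
  omega

end FreeStarAlg
namespace FreeStarAlg

variable {g : ℕ}

local instance : DecidableEq (FreeMonoid (Fin g ⊕ Fin g)) := Classical.decEq _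

/-! ### SOS basics -/

lemma sos_zero : IsSOS (0 : FreeStarAlg g) := ⟨0, fun _ => 0, by simp⟩

lemma sos_add {σ τ : FreeStarAlg g} (hσ : IsSOS σ) (hτ : IsSOS τ) : IsSOS (σ + τ) := by
  obtain ⟨k₁, q₁, rfl⟩ := hσ
  obtain ⟨k₂, q₂, rfl⟩ := hτ
  refine ⟨k₁ + k₂, Fin.append q₁ q₂, ?_⟩
  rw [Fin.sum_univ_add]
  congr 1
  · exact Finset.sum_congr rfl (fun i _ => by rw [Fin.append_left])
  · exact Finset.sum_congr rfl (fun i _ => by rw [Fin.append_right])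

lemma sos_sq (q : FreeStarAlg g) : IsSOS (starP q * q) := ⟨1, fun _ => q, by simp⟩

lemma sos_smul_pos {σ : FreeStarAlg g} {r : ℝ} (hr : 0 < r) (hσ : IsSOS σ) : IsSOS (r • σ) := by
  obtain ⟨k, q, rfl⟩ := hσ
  refine ⟨k, fun i => Real.sqrt r • q i, ?_⟩
  rw [Finset.smul_sum]
  apply Finset.sum_congr rfl
  intro i _
  rw [starP_smul, smul_mul_assoc, mul_smul_comm, smul_smul, Real.mul_self_sqrt hr.le]

lemma isHom_single (w : Wd g) (r : ℝ) : IsHom (len w) (MonoidAlgebra.single w r) := by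
  intro v hv
  have := Finsupp.support_single_subset hv
  rw [Finset.mem_singleton] at this
  subst this; rfl

lemma isHom_sub {d : ℕ} {f h : FreeStarAlg g} (hf : IsHom d f) (hh : IsHom d h) :
    IsHom d (f - h) := by
  rw [sub_eq_add_neg]; exact isHom_add hf (isHom_neg hh)

lemma pair_sub_right (f h₁ h₂ : FreeStarAlg g) :
    pair f (h₁ - h₂) = pair f h₁ - pair f h₂ := by
  have : h₁ - h₂ + h₂ = h₁ := by abel
  have h2 := pair_add_right f (h₁ - h₂) h₂
  rw [this] at h2
  linarith

lemma pair_sub_left (f₁ f₂ h : FreeStarAlg g) :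
    pair (f₁ - f₂) h = pair f₁ h - pair f₂ h := by
  rw [pair_comm, pair_sub_right, pair_comm f₁, pair_comm f₂]

lemma pair_single_right (f : FreeStarAlg g) (w : Wd g) (r : ℝ) :
    pair f (MonoidAlgebra.single w r) = f w * r := by
  rw [pair_eq_sum_right]
  by_cases hr : r = 0
  · subst hr; simp
  · rw [MonoidAlgebra.coeff_single, Finsupp.support_single_ne_zero _ hr, Finset.sum_singleton, Finsupp.single_eq_same]

/-! ### bilinear expansions -/

lemma pair_expand_sub (τ φ ψ : FreeStarAlg g) (t : ℝ) :
    pair τ (starP (φ - t • ψ) * (φ - t • ψ)) =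
      pair τ (starP φ * φ) - t * pair τ (starP φ * ψ) - t * pair τ (starP ψ * φ)
        + t * t * pair τ (starP ψ * ψ) := by
  simp only [starP_sub, starP_smul, sub_mul, mul_sub, smul_mul_assoc, mul_smul_comm,
    smul_smul, pair_sub_right, pair_smul_right]
  ring

lemma pair_expand_add (τ φ ψ : FreeStarAlg g) (t : ℝ) :
    pair τ (starP (φ + t • ψ) * (φ + t • ψ)) =
      pair τ (starP φ * φ) + t * pair τ (starP φ * ψ) + t * pair τ (starP ψ * φ)
        + t * t * pair τ (starP ψ * ψ) := by
  simp only [starP_add, starP_smul, add_mul, mul_add, smul_mul_assoc, mul_smul_comm,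
    smul_smul, pair_add_right, pair_smul_right]
  ring

/-! ### Hermitian + positive pairing implies SOS -/

lemma herm_apply {τ : FreeStarAlg g} (hherm : starP τ = τ) (w : Wd g) :
    τ (starWord w) = τ w := by
  conv_rhs => rw [← hherm]
  rw [starP_apply]

def rowSet (e : ℕ) (τ : FreeStarAlg g) : Finset (Wd g) :=
  τ.coeff.support.image (fun w => starWord (wtake e w))

lemma sos_of_psd_aux {e : ℕ} : ∀ (N : ℕ) (τ : FreeStarAlg g), (rowSet e τ).card ≤ N →
    IsHom (e + e) τ → starP τ = τ →
    (∀ φ, IsHom e φ → 0 ≤ pair τ (starP φ * φ)) → IsSOS τ := by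
  intro N
  induction N with
  | zero =>
    intro τ hcard hhom hherm hpsd
    have : τ = 0 := by
      by_contra h0
      obtain ⟨w, hw⟩ := Finsupp.support_nonempty_iff.mpr (MonoidAlgebra.coeff_eq_zero.not.mpr h0)
      have hmem : starWord (wtake e w) ∈ rowSet e τ := Finset.mem_image_of_mem _ hw
      have := Finset.card_pos.mpr ⟨_, hmem⟩
      omega
    rw [this]; exact sos_zero
  | succ N ih =>
    intro τ hcard hhom hherm hpsd
    by_cases h0 : τ = 0
    · rw [h0]; exact sos_zero
    obtain ⟨w₁, hw₁⟩ := Finsupp.support_nonempty_iff.mpr (MonoidAlgebra.coeff_eq_zero.not.mpr h0)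
    have hlenw₁ : len w₁ = e + e := hhom w₁ hw₁
    set y₀ := starWord (wtake e w₁) with hy₀
    have hleny₀ : len y₀ = e := by
      rw [hy₀, len_starWord, len_wtake]; omega
    have hswy₀ : starWord y₀ = wtake e w₁ := by rw [hy₀, starWord_starWord]
    have hlenswy₀ : len (starWord y₀) = e := by rw [len_starWord, hleny₀]
    set b := lcut (starWord y₀) τ with hb
    have hbhom : IsHom e b := isHom_lcut (k := e) hhom hlenswy₀
    have hbz₁ : b (wdrop e w₁) = τ w₁ := by
      rw [hb, lcut_apply', hswy₀, wtake_mul_wdrop]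
    have hb0 : b ≠ 0 := by
      intro hcon
      apply Finsupp.mem_support_iff.mp hw₁
      rw [← hbz₁, hcon]; rfl
    set s₀ : FreeStarAlg g := MonoidAlgebra.single y₀ 1 with hs₀
    have hs₀hom : IsHom e s₀ := by rw [hs₀, ← hleny₀]; exact isHom_single y₀ 1
    have keyrow : ∀ φ : FreeStarAlg g, pair τ (starP s₀ * φ) = pair b φ := by
      intro φ
      rw [hs₀, starP_single, pair_single_mul, hb]
    have hexch : ∀ φ ψ : FreeStarAlg g, pair τ (starP φ * ψ) = pair τ (starP ψ * φ) := by
      intro φ ψ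
      conv_lhs => rw [← hherm]
      rw [pair_starP_left, starP_mul, starP_starP]
    set q₀ : ℝ := b y₀ with hq₀
    have hq₀eval : pair τ (starP s₀ * s₀) = q₀ := by
      rw [keyrow, hs₀, pair_single_right, mul_one]
    have hq₀nonneg : 0 ≤ q₀ := by rw [← hq₀eval]; exact hpsd s₀ hs₀hom
    have hbrow : ∀ φ : FreeStarAlg g, pair τ (starP φ * s₀) = pair b φ := by
      intro φ
      rw [hexch, keyrow]
    have hq₀pos : 0 < q₀ := by
      rcases lt_or_eq_of_le hq₀nonneg with h | h
      · exact h
      exfalso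
      apply hb0
      ext z
      simp only [fzero_apply, Finsupp.coe_zero, Pi.zero_apply]
      by_cases hz : b z = 0
      · exact hz
      exfalso
      have hzlen : len z = e := hbhom z (Finsupp.mem_support_iff.mpr hz)
      have hszhom : IsHom e (MonoidAlgebra.single z (1:ℝ)) := by
        rw [← hzlen]; exact isHom_single z 1
      set sz : FreeStarAlg g := MonoidAlgebra.single z 1 with hsz
      have hcross1 : pair τ (starP sz * s₀) = b z := by
        rw [hbrow, hsz, pair_single_right, mul_one]
      have hcross2 : pair τ (starP s₀ * sz) = b z := by
        rw [keyrow, hsz, pair_single_right, mul_one]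
      set A : ℝ := pair τ (starP sz * sz) with hA
      have hquad : ∀ t : ℝ, 0 ≤ A + t * b z + t * b z + t * t * 0 := by
        intro t
        have hφ : IsHom e (sz + t • s₀) := isHom_add hszhom (isHom_smul hs₀hom t)
        have hval := hpsd _ hφ
        rw [pair_expand_add, hcross1, hcross2, hq₀eval, ← h, ← hA] at hval
        exact hval
      have h1 := hquad (-(A + 1) / (2 * b z))
      have h3 : -(A + 1) / (2 * b z) * b z = -(A+1) / 2 := by
        field_simp
      rw [h3] at h1
      linarith
    -- Schur complement step
    set τ₁ := τ - q₀⁻¹ • (starP b * b) with hτ₁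
    have hbbhom : IsHom (e + e) (starP b * b) := isHom_mul (isHom_starP hbhom) hbhom
    have hτ₁hom : IsHom (e + e) τ₁ := isHom_sub hhom (isHom_smul hbbhom _)
    have hτ₁herm : starP τ₁ = τ₁ := by
      rw [hτ₁, starP_sub, hherm, starP_smul, starP_mul, starP_starP]
    have hτ₁psd : ∀ φ, IsHom e φ → 0 ≤ pair τ₁ (starP φ * φ) := by
      intro φ hφ
      have hval : pair τ₁ (starP φ * φ)
          = pair τ (starP φ * φ) - q₀⁻¹ * (pair b φ * pair b φ) := by
        rw [hτ₁, pair_sub_left, pair_smul_left,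
          pair_mul_mul (isHom_starP hbhom) hbhom (isHom_starP hφ) hφ, pair_starP_starP]
      set t : ℝ := q₀⁻¹ * pair b φ with ht
      have hpos := hpsd _ (isHom_sub hφ (isHom_smul hs₀hom t))
      rw [pair_expand_sub, hbrow, keyrow, hq₀eval] at hpos
      have hEq : pair τ (starP φ * φ) - t * pair b φ - t * pair b φ + t * t * q₀
          = pair τ (starP φ * φ) - q₀⁻¹ * (pair b φ * pair b φ) := by
        rw [ht]; field_simp; ring
      rw [hval, ← hEq]
      exact hpos
    -- card decrease
    have hy₀mem : y₀ ∈ rowSet e τ := Finset.mem_image_of_mem _ hw₁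
    have hsubset : rowSet e τ₁ ⊆ (rowSet e τ).erase y₀ := by
      intro y hy
      obtain ⟨w, hwsupp, hyw⟩ := Finset.mem_image.mp hy
      have hlenw : len w = e + e := hτ₁hom w hwsupp
      have hwne : τ₁ w ≠ 0 := Finsupp.mem_support_iff.mp hwsupp
      have hleny : len y = e := by rw [← hyw, len_starWord, len_wtake]; omega
      have hcoef : (starP b * b) w = b y * b (wdrop e w) := by
        rw [coeff_mul_of_degLE (isHom_starP hbhom).degLE' hbhom.degLE' hlenw, starP_apply, hyw]
      have hval : τ₁ w = τ w - q₀⁻¹ * (b y * b (wdrop e w)) := by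
        rw [hτ₁, fsub_apply, fsmul_apply, smul_eq_mul, hcoef]
      have hyne : y ≠ y₀ := by
        intro hcon
        apply hwne
        have htake : wtake e w = starWord y₀ := by rw [← hcon, ← hyw, starWord_starWord]
        have hτw : τ w = b (wdrop e w) := by
          conv_lhs => rw [← wtake_mul_wdrop e w, htake]
          rw [hb, lcut_apply']
        rw [hval, hτw, hcon, ← hq₀]
        field_simp
        ring
      have hymem : y ∈ rowSet e τ := by
        by_contra hnot
        have hτw : τ w = 0 := by
          by_contra hne
          exact hnot (Finset.mem_image.mpr ⟨w, Finsupp.mem_support_iff.mpr hne, hyw⟩)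
        have hby : b y = 0 := by
          rw [hb, lcut_apply',
            show starWord y₀ * y = starWord (starWord y * y₀) by
              rw [starWord_mul, starWord_starWord y],
            herm_apply hherm]
          by_contra hne
          apply hnot
          apply Finset.mem_image.mpr
          refine ⟨starWord y * y₀, Finsupp.mem_support_iff.mpr hne, ?_⟩
          rw [show e = len (starWord y) by rw [len_starWord, hleny], wtake_of_mul,
            starWord_starWord]
        apply hwne
        rw [hval, hτw, hby]
        ring
      exact Finset.mem_erase.mpr ⟨hyne, hymem⟩
    have hcard₁ : (rowSet e τ₁).card ≤ N := by
      have h1 := Finset.card_le_card hsubset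
      rw [Finset.card_erase_of_mem hy₀mem] at h1
      omega
    have ihτ₁ := ih τ₁ hcard₁ hτ₁hom hτ₁herm hτ₁psd
    have hrecon : τ = τ₁ + starP (Real.sqrt q₀⁻¹ • b) * (Real.sqrt q₀⁻¹ • b) := by
      rw [starP_smul, smul_mul_assoc, mul_smul_comm, smul_smul,
        Real.mul_self_sqrt (inv_nonneg.mpr hq₀nonneg), hτ₁]
      abel
    rw [hrecon]
    exact sos_add ihτ₁ (sos_sq _)

lemma sos_of_psd {e : ℕ} {τ : FreeStarAlg g} (hhom : IsHom (e + e) τ) (hherm : starP τ = τ)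
    (hpsd : ∀ φ, IsHom e φ → 0 ≤ pair τ (starP φ * φ)) : IsSOS τ :=
  sos_of_psd_aux (rowSet e τ).card τ le_rfl hhom hherm hpsd

end FreeStarAlg
namespace FreeStarAlg

variable {g : ℕ}

local instance : DecidableEq (FreeMonoid (Fin g ⊕ Fin g)) := Classical.decEq _

/-! ### more word lemmas -/

lemma wtake_mul_left {k : ℕ} {u : Wd g} (hk : k ≤ len u) (v : Wd g) :
    wtake k (u * v) = wtake k u := by
  apply FreeMonoid.toList.injective
  simp only [wtake, FreeMonoid.toList_mul, FreeMonoid.toList_ofList]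
  exact List.take_append_of_le_length hk

lemma wdrop_mul_left {k : ℕ} {u : Wd g} (hk : k ≤ len u) (v : Wd g) :
    wdrop k (u * v) = wdrop k u * v := by
  apply FreeMonoid.toList.injective
  simp only [wdrop, FreeMonoid.toList_mul, FreeMonoid.toList_ofList]
  exact List.drop_append_of_le_length hk

lemma word_len_zero {w : Wd g} (h : len w = 0) : w = 1 := by
  apply FreeMonoid.toList.injective
  simpa [len, List.length_eq_zero_iff] using h

lemma isHom_one : IsHom 0 (1 : FreeStarAlg g) := by
  intro w hw
  have := Finsupp.support_single_subset (by exact hw : w ∈ (MonoidAlgebra.single 1 (1:ℝ)).coeff.support)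
  rw [Finset.mem_singleton] at this
  subst this; rfl

lemma isHom_zero_scalar {E : FreeStarAlg g} (hE : IsHom 0 E) :
    E = MonoidAlgebra.single 1 (E 1) := by
  ext w
  by_cases hw : w = (1 : Wd g)
  · subst hw; rw [MonoidAlgebra.coeff_single, Finsupp.single_eq_same]
  · rw [MonoidAlgebra.coeff_single, Finsupp.single_eq_of_ne hw]
    apply hE.apply_ne
    intro hlen
    exact hw (word_len_zero hlen)

lemma mul_scalar_single {γ : ℝ} (X : FreeStarAlg g) :
    X * MonoidAlgebra.single 1 γ = γ • X := by
  have h1 : MonoidAlgebra.single (1 : Wd g) γ = γ • (1 : FreeStarAlg g) := by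
    rw [MonoidAlgebra.one_def, MonoidAlgebra.smul_single, smul_eq_mul, mul_one]
  rw [h1, mul_smul_comm, mul_one]

lemma mul_word_right_injective (z : Wd g) : Function.Injective (fun y : Wd g => y * z) := by
  intro y y' he
  simp only at he
  have h1 := congrArg (wtake (len y)) he
  have h2 : len y = len y' := by
    have := congrArg len he
    rw [len_mul, len_mul] at this
    omega
  rwa [wtake_of_mul, h2, wtake_of_mul] at h1

/-- Right cut: `(rcutw z f) y = f (y * z)`. -/
def rcutw (z : Wd g) (f : FreeStarAlg g) : FreeStarAlg g :=
  MonoidAlgebra.ofCoeff <| Finsupp.comapDomain (fun y => y * z) f.coeff ((mul_word_right_injective z).injOn)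

lemma rcutw_apply (z : Wd g) (f : FreeStarAlg g) (y : Wd g) : rcutw z f y = f (y * z) :=
  Finsupp.comapDomain_apply _ _ _ _

/-! ### Levi-type lemma for homogeneous polynomials -/

lemma levi {a e d' : ℕ} {A B C D : FreeStarAlg g} (hA : IsHom a A) (hB : IsHom (e + d') B)
    (hC : IsHom (a + e) C) (hD : IsHom d' D) (hD0 : D ≠ 0) (heq : A * B = C * D) :
    ∃ E, IsHom e E ∧ C = A * E := by
  obtain ⟨z₀, hz₀, _⟩ := exists_word_deg hD0
  have hz₀len : len z₀ = d' := hD z₀ hz₀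
  have hDz₀ : D z₀ ≠ 0 := Finsupp.mem_support_iff.mp hz₀
  set E := (D z₀)⁻¹ • rcutw z₀ B with hE
  have hEhom : IsHom e E := by
    apply isHom_smul
    intro y hy
    have : B (y * z₀) ≠ 0 := by
      have := Finsupp.mem_support_iff.mp hy
      rwa [rcutw_apply] at this
    have hlen := hB _ (Finsupp.mem_support_iff.mpr this)
    have := len_mul y z₀
    simp only [len] at *
    omega
  refine ⟨E, hEhom, ?_⟩
  ext w
  by_cases hw : len w = a + e
  · have hkey : (A * B) (w * z₀) = (C * D) (w * z₀) := by rw [heq]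
    have hlenwz : len (w * z₀) = a + (e + d') := by rw [len_mul]; omega
    have hL : (A * B) (w * z₀) = A (wtake a w) * B (wdrop a w * z₀) := by
      rw [coeff_mul_of_degLE hA.degLE' hB.degLE' hlenwz,
        wtake_mul_left (by omega), wdrop_mul_left (by omega)]
    have hR : (C * D) (w * z₀) = C w * D z₀ := by
      have hlen' : len (w * z₀) = (a + e) + d' := by rw [len_mul]; omega
      rw [coeff_mul_of_degLE hC.degLE' hD.degLE' hlen', ← hw, wtake_of_mul, wdrop_of_mul]
    rw [hL, hR] at hkey
    have hAE : (A * E) w = A (wtake a w) * ((D z₀)⁻¹ * B (wdrop a w * z₀)) := by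
      rw [coeff_mul_of_degLE hA.degLE' hEhom.degLE' hw, hE, fsmul_apply,
        rcutw_apply, smul_eq_mul]
    rw [hAE]
    field_simp
    exact hkey.symm
  · rw [hC.apply_ne hw, (isHom_mul hA hEhom).apply_ne hw]

/-! ### Reconstruction of a right factor from orthogonality relations -/

lemma recon {k n' : ℕ} {f G : FreeStarAlg g} (hf : IsHom (k + n') f) (hG : IsHom n' G)
    (hG0 : G ≠ 0)
    (H : ∀ w : Wd g, len w = k → ∀ ψ : FreeStarAlg g, IsHom n' ψ → pair G ψ = 0 →
      pair f (MonoidAlgebra.single w 1 * ψ) = 0) :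
    ∃ F, IsHom k F ∧ f = F * G := by
  have hGG : 0 < pair G G := pair_self_pos hG0
  have claim1 : ∀ w : Wd g, len w = k →
      lcut w f = (pair (lcut w f) G / pair G G) • G := by
    intro w hw
    set t := pair (lcut w f) G / pair G G with ht
    set r := lcut w f - t • G with hr
    have hrhom : IsHom n' r := isHom_sub (isHom_lcut hf hw) (isHom_smul hG t)
    have hGr : pair G r = 0 := by
      rw [hr, pair_sub_right, pair_smul_right, pair_comm G, ht]
      field_simp
      ring
    have hfr : pair (lcut w f) r = 0 := by
      rw [← pair_single_mul]
      exact H w hw r hrhom hGr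
    have hrr : pair r r = 0 := by
      rw [hr, pair_sub_left, pair_smul_left, ← hr, hfr, hGr]
      ring
    have := pair_self_eq_zero hrr
    rw [hr, sub_eq_zero] at this
    rw [this]
  set img := f.coeff.support.image (wtake k) with himg
  have himglen : ∀ v ∈ img, len v = k := by
    intro v hv
    obtain ⟨z, hz, rfl⟩ := Finset.mem_image.mp hv
    have := hf z hz
    rw [len_wtake]
    change len z = k + n' at this
    omega
  set F := ∑ v ∈ img, MonoidAlgebra.single v (pair (lcut v f) G / pair G G) with hF
  have hFapply : ∀ v : Wd g, F v =
      if v ∈ img then pair (lcut v f) G / pair G G else 0 := by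
    intro v
    rw [hF, ffinset_sum_apply]
    rw [Finset.sum_congr rfl (fun u _ => MonoidAlgebra.coeff_single_apply)]
    exact Finset.sum_ite_eq' img v _
  have hFhom : IsHom k F := by
    intro w hw
    have hne : F w ≠ 0 := Finsupp.mem_support_iff.mp hw
    rw [hFapply] at hne
    by_cases hmem : w ∈ img
    · exact himglen w hmem
    · rw [if_neg hmem] at hne; exact absurd rfl hne
  refine ⟨F, hFhom, ?_⟩
  ext z
  by_cases hz : len z = k + n'
  · rw [coeff_mul_of_degLE hFhom.degLE' hG.degLE' hz, hFapply]
    have hwt : len (wtake k z) = k := by rw [len_wtake]; omega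
    by_cases hmem : wtake k z ∈ img
    · rw [if_pos hmem]
      have hc := claim1 (wtake k z) hwt
      have : lcut (wtake k z) f (wdrop k z)
          = ((pair (lcut (wtake k z) f) G / pair G G) • G) (wdrop k z) := by rw [← hc]
      rw [lcut_apply', wtake_mul_wdrop, fsmul_apply, smul_eq_mul] at this
      rw [← this]
    · rw [if_neg hmem, zero_mul]
      by_contra hne
      exact hmem (Finset.mem_image.mpr ⟨z, Finsupp.mem_support_iff.mpr
        (fun h => hne (by rw [h])), rfl⟩)
  · rw [hf.apply_ne hz, (isHom_mul hFhom hG).apply_ne hz]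

/-! ### homogeneity of list products -/

lemma listProdHom : ∀ (l : List (FreeStarAlg g)), (∀ q ∈ l, ∃ d, IsHom d q) →
    ∃ D, IsHom D l.prod := by
  intro l
  induction l with
  | nil => exact fun _ => ⟨0, by rw [List.prod_nil]; exact isHom_one⟩
  | cons q₁ l' ih =>
    intro hl
    obtain ⟨d₁, h₁⟩ := hl q₁ (List.mem_cons_self)
    obtain ⟨D', hD'⟩ := ih (fun q hq => hl q (List.mem_cons_of_mem _ hq))
    exact ⟨d₁ + D', by rw [List.prod_cons]; exact isHom_mul h₁ hD'⟩

/-! ### every homogeneous splitting of the product aligns with a prefix -/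

lemma prefixsplit : ∀ (l : List (FreeStarAlg g)),
    (∀ q ∈ l, Irred q ∧ ∃ d, IsHom d q) → l.prod ≠ 0 →
    ∀ (s t : ℕ) (Q R : FreeStarAlg g), 0 < s → IsHom s Q → Q ≠ 0 → IsHom t R →
    l.prod = Q * R →
    ∃ (j : ℕ) (μ : ℝ), 1 ≤ j ∧ j ≤ l.length ∧ μ ≠ 0 ∧ (l.take j).prod = μ • Q := by
  intro l
  induction l with
  | nil =>
    intro _ hne s t Q R hs hQ _ hR heq
    rw [List.prod_nil] at heq
    exfalso
    have h1 : (1 : FreeStarAlg g) (1 : Wd g) = 1 := by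
      rw [MonoidAlgebra.one_def, MonoidAlgebra.coeff_single, Finsupp.single_eq_same]
    have hQR := isHom_mul hQ hR
    have : (Q * R) (1 : Wd g) ≠ 0 := by rw [← heq, h1]; exact one_ne_zero
    have := hQR _ (Finsupp.mem_support_iff.mpr this)
    change len (1 : Wd g) = s + t at this
    rw [len_one] at this
    omega
  | cons q₁ l' ih =>
    intro hfac hne s t Q R hs hQ hQ0 hR heq
    rw [List.prod_cons] at heq hne
    have hq₁0 : q₁ ≠ 0 := fun h => hne (by rw [h, zero_mul])
    have hl'0 : l'.prod ≠ 0 := fun h => hne (by rw [h, mul_zero])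
    obtain ⟨hirr, d₁, hq₁hom⟩ := hfac q₁ (List.mem_cons_self)
    have hfac' := fun q hq => hfac q (List.mem_cons_of_mem _ hq)
    obtain ⟨D', hD'hom⟩ := listProdHom l' (fun q hq => (hfac' q hq).2)
    have hR0 : R ≠ 0 := fun h => hne (by rw [heq, h, mul_zero])
    -- degrees match
    have hdeg : d₁ + D' = s + t := by
      obtain ⟨w, hw, _⟩ := exists_word_deg hne
      have h1 := isHom_mul hq₁hom hD'hom w hw
      have h2 := isHom_mul hQ hR w (by rw [← heq]; exact hw)
      omega
    by_cases hsd : s ≤ d₁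
    · -- Q is a left factor of q₁
      have hRhom : IsHom ((d₁ - s) + D') R := by
        have heqt : (d₁ - s) + D' = t := by omega
        rw [heqt]; exact hR
      have hq₁hom' : IsHom (s + (d₁ - s)) q₁ := by
        have : s + (d₁ - s) = d₁ := by omega
        rw [this]; exact hq₁hom
      obtain ⟨E, hEhom, hq₁E⟩ := levi hQ hRhom hq₁hom' hD'hom hl'0 heq.symm
      have hE0 : E ≠ 0 := fun h => hq₁0 (by rw [hq₁E, h, mul_zero])
      rcases Nat.lt_or_ge s d₁ with hlt | hge
      · exfalso
        apply hirr
        refine ⟨Q, E, hq₁E, ?_, ?_⟩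
        · rw [deg_of_isHom hQ hQ0, deg_of_isHom hq₁hom hq₁0]
          exact hlt
        · rw [deg_of_isHom hEhom hE0, deg_of_isHom hq₁hom hq₁0]
          omega
      · -- s = d₁, E is a scalar
        have hseq : s = d₁ := by omega
        have hE00 : IsHom 0 E := by
          have : d₁ - s = 0 := by omega
          rwa [this] at hEhom
        obtain ⟨γ, hγdef⟩ : ∃ γ : ℝ, E 1 = γ := ⟨E 1, rfl⟩
        have hEsc : E = MonoidAlgebra.single 1 γ := by
          rw [← hγdef]; exact isHom_zero_scalar hE00
        have hγ : γ ≠ 0 := by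
          intro h
          apply hE0
          rw [hEsc, h]
          exact MonoidAlgebra.single_zero _
        refine ⟨(1 : ℕ), γ, le_rfl, Nat.succ_le_succ (Nat.zero_le _), hγ, ?_⟩
        have htake : (List.take 1 (q₁ :: l')).prod = q₁ := by simp
        rw [htake, hq₁E, hEsc, mul_scalar_single]
    · -- q₁ is a left factor of Q; recurse
      have hl'hom : IsHom ((s - d₁) + t) l'.prod := by
        have : (s - d₁) + t = D' := by omega
        rw [this]; exact hD'hom
      have hQhom' : IsHom (d₁ + (s - d₁)) Q := by
        have : d₁ + (s - d₁) = s := by omega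
        rw [this]; exact hQ
      obtain ⟨E, hEhom, hQE⟩ := levi hq₁hom hl'hom hQhom' hR hR0 heq
      have hE0 : E ≠ 0 := fun h => hQ0 (by rw [hQE, h, mul_zero])
      have hl'eq : l'.prod = E * R := by
        have h1 : q₁ * (l'.prod - E * R) = 0 := by
          rw [mul_sub, heq, hQE, mul_assoc, sub_self]
        have := hom_mul_left_cancel₀ hq₁hom hq₁0 h1
        rwa [sub_eq_zero] at this
      obtain ⟨j', μ, hj'1, hj'2, hμ, hprodE⟩ := ih hfac' hl'0 (s - d₁) t E R
        (by omega) hEhom hE0 hR hl'eq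
      refine ⟨j' + 1, μ, by omega, ?_, hμ, ?_⟩
      · rw [List.length_cons]; omega
      · rw [List.take_succ_cons, List.prod_cons, hprodE, mul_smul_comm, hQE]

end FreeStarAlg
namespace FreeStarAlg

variable {g : ℕ}

local instance : DecidableEq (FreeMonoid (Fin g ⊕ Fin g)) := Classical.decEq _

lemma degLE_starP {f : FreeStarAlg g} {M : ℕ} (hf : degLE f M) : degLE (starP f) M := by
  intro v hv
  rw [support_starP] at hv
  obtain ⟨v', hv', rfl⟩ := Finset.mem_image.mp hv
  rw [len_starWord]
  exact hf v' hv'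

lemma isHom_cast {d d' : ℕ} {f : FreeStarAlg g} (h : d = d') (hf : IsHom d f) : IsHom d' f :=
  h ▸ hf

lemma starP_herm_sq (y : FreeStarAlg g) : starP (starP y * y) = starP y * y := by
  rw [starP_mul, starP_starP]

lemma filter_len_apply (N : ℕ) (u : FreeStarAlg g) {w : Wd g} (hw : len w = N) :
    (MonoidAlgebra.ofCoeff (Finsupp.filter (fun w => len w = N) u.coeff)) w = u w := by
  rw [Finsupp.filter_apply, if_pos hw]

lemma isHom_filter_len (N : ℕ) (u : FreeStarAlg g) :
    IsHom N (MonoidAlgebra.ofCoeff (Finsupp.filter (fun w => len w = N) u.coeff)) := by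
  intro w hw
  rw [Finsupp.support_filter, Finset.mem_filter] at hw
  exact hw.2

lemma main_ind (p p' : FreeStarAlg g) (n : ℕ) (hn : 1 ≤ n)
    (hdegLEp : degLE p n)
    (hp'hom : IsHom n p') (hp'coef : ∀ w : Wd g, len w = n → p' w = p w) (hp'0 : p' ≠ 0)
    (ps : List (FreeStarAlg g)) (hfac : ∀ q ∈ ps, Irred q ∧ ∃ d, IsHom d q)
    (hprod : p' = ps.prod)
    (r : ℕ) (b : Fin r → FreeStarAlg g) (i₀ : Fin r) (hb0 : b i₀ ≠ 0)
    (hmin : ∀ i (γ : FreeStarAlg g), b i ≠ 0 → n ≤ deg (b i) →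
      IsHom (deg (b i) - n) γ → ∃ w, len w = deg (b i) ∧ b i w ≠ (γ * p') w) :
    ∀ N : ℕ, ∀ u : FreeStarAlg g, deg u = N →
    (∑ i, starP (b i) * b i) = u * p + starP (u * p) →
    ∃ j, 1 ≤ j ∧ j ≤ ps.length ∧
      (IsSOS ((ps.take j).prod + starP (ps.take j).prod) ∨
       IsSOS (-((ps.take j).prod + starP (ps.take j).prod))) := by
  intro N
  induction N using Nat.strong_induction_on with
  | _ N ih =>
  intro u hdegu hrep
  -- the maximal degree d of the b i
  set d := Finset.univ.sup (fun i => deg (b i)) with hd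
  have hbd : ∀ i, degLE (b i) d := by
    intro i w hw
    exact le_trans (degLE_deg (b i) w hw)
      (Finset.le_sup (f := fun i => deg (b i)) (Finset.mem_univ i))
  have histar : ∃ i', deg (b i') = d ∧ b i' ≠ 0 := by
    obtain ⟨i₁, _, hi₁⟩ := Finset.exists_mem_eq_sup Finset.univ
      ⟨i₀, Finset.mem_univ i₀⟩ (fun i => deg (b i))
    by_cases h1 : b i₁ = 0
    · refine ⟨i₀, ?_, hb0⟩
      have hd0 : d = 0 := by rw [hd, hi₁, h1]; rfl
      have h2 : deg (b i₀) ≤ d := Finset.le_sup (f := fun i => deg (b i)) (Finset.mem_univ i₀)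
      omega
    · exact ⟨i₁, hi₁.symm, h1⟩
  obtain ⟨i', hi'd, hi'0⟩ := histar
  obtain ⟨w₀, hw₀mem, hw₀len⟩ := exists_word_deg hi'0
  rw [hi'd] at hw₀len
  -- positivity at the word (starWord w₀) * w₀
  have hsqcoef : ∀ (i : Fin r) (w : Wd g), len w = d + d →
      (starP (b i) * b i) w = b i (starWord (wtake d w)) * b i (wdrop d w) := by
    intro i w hw
    rw [coeff_mul_of_degLE (degLE_starP (hbd i)) (hbd i) hw, starP_apply]
  have hwplen : len (starWord w₀ * w₀) = d + d := by
    rw [len_mul, len_starWord, hw₀len]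
  have Spos : 0 < (∑ i, starP (b i) * b i) (starWord w₀ * w₀) := by
    rw [ffinset_sum_apply]
    apply Finset.sum_pos' (fun i _ => by
      rw [hsqcoef i _ hwplen]
      rw [show wtake d (starWord w₀ * w₀) = starWord w₀ by
          rw [show d = len (starWord w₀) by rw [len_starWord, hw₀len], wtake_of_mul],
        show wdrop d (starWord w₀ * w₀) = w₀ by
          rw [show d = len (starWord w₀) by rw [len_starWord, hw₀len], wdrop_of_mul],
        starWord_starWord]
      exact mul_self_nonneg _)
    refine ⟨i', Finset.mem_univ i', ?_⟩
    rw [hsqcoef i' _ hwplen]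
    rw [show wtake d (starWord w₀ * w₀) = starWord w₀ by
        rw [show d = len (starWord w₀) by rw [len_starWord, hw₀len], wtake_of_mul],
      show wdrop d (starWord w₀ * w₀) = w₀ by
        rw [show d = len (starWord w₀) by rw [len_starWord, hw₀len], wdrop_of_mul],
      starWord_starWord]
    exact mul_self_pos.mpr (Finsupp.mem_support_iff.mp hw₀mem)
  -- u ≠ 0
  have hu0 : u ≠ 0 := by
    intro hcon
    rw [hcon, zero_mul] at hrep
    simp only [starP_zero, add_zero] at hrep
    rw [hrep] at Spos
    simp at Spos
  have hudegLE : degLE u N := by rw [← hdegu]; exact degLE_deg u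
  -- S has a word of length d + d, so d + d ≤ N + n
  have hddle : d + d ≤ N + n := by
    have h1 : (u * p) (starWord w₀ * w₀) ≠ 0 ∨ (starP (u * p)) (starWord w₀ * w₀) ≠ 0 := by
      by_contra hcon
      push_neg at hcon
      have := Finsupp.ext_iff.mp (congrArg MonoidAlgebra.coeff hrep) (starWord w₀ * w₀)
      rw [fadd_apply, hcon.1, hcon.2, add_zero] at this
      rw [this] at Spos
      simp at Spos
    have hdegup : degLE (u * p) (N + n) := degLE_mul hudegLE hdegLEp
    rcases h1 with h | h
    · have := hdegup _ (Finsupp.mem_support_iff.mpr h)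
      omega
    · rw [starP_apply] at h
      have := hdegup _ (Finsupp.mem_support_iff.mpr h)
      rw [len_starWord, len_mul, len_starWord] at this
      omega
  -- coefficient identification at top level
  set c : FreeStarAlg g := MonoidAlgebra.ofCoeff (Finsupp.filter (fun w => len w = N) u.coeff) with hc
  have hchom : IsHom N c := isHom_filter_len N u
  have hccoef : ∀ w, len w = N → c w = u w := fun w hw => filter_len_apply N u hw
  have hc0 : c ≠ 0 := by
    obtain ⟨w, hw, hwlen⟩ := exists_word_deg hu0
    rw [hdegu] at hwlen
    intro hcon
    have := hccoef w hwlen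
    rw [hcon] at this
    exact Finsupp.mem_support_iff.mp hw this.symm
  have hscne : starP c ≠ 0 := fun h => hc0 (starP_eq_zero_iff.mp h)
  have COEQ : ∀ w : Wd g, len w = N + n → (c * p') w = (u * p) w := by
    intro w hw
    rw [coeff_mul_of_degLE hchom.degLE' hp'hom.degLE' hw,
      coeff_mul_of_degLE hudegLE hdegLEp hw,
      hccoef _ (by rw [len_wtake]; omega),
      hp'coef _ (by rw [len_wdrop]; omega)]
  have COEQ' : ∀ w : Wd g, len w = N + n →
      (c * p' + starP (c * p')) w = (u * p + starP (u * p)) w := by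
    intro w hw
    rw [fadd_apply, fadd_apply, starP_apply, starP_apply, COEQ w hw,
      COEQ _ (by rw [len_starWord]; exact hw)]
  rcases Nat.lt_or_ge (d + d) (N + n) with hstuck | hend
  · -- STUCK CASE: top-degree cancellation
    have X₀ : c * p' + starP (c * p') = 0 := by
      ext w
      simp only [fzero_apply, Finsupp.coe_zero, Pi.zero_apply]
      by_cases hw : len w = N + n
      · rw [COEQ' w hw, ← hrep, ffinset_sum_apply]
        apply Finset.sum_eq_zero
        intro i _
        apply apply_eq_zero_of_degLE (degLE_mul (degLE_starP (hbd i)) (hbd i))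
        omega
      · have h1 := (isHom_mul hchom hp'hom).apply_ne hw
        have h2 := (isHom_starP (isHom_mul hchom hp'hom)).apply_ne hw
        rw [fadd_apply, h1, h2, add_zero]
    have h3 : c * p' + starP p' * starP c = 0 := by
      rw [← starP_mul c p']; exact X₀
    have hX : c * p' = starP p' * (-(starP c)) := by
      have h1 : c * p' = -(starP (c * p')) := by
        have := eq_neg_of_add_eq_zero_left X₀
        exact this
      rw [h1, starP_mul, mul_neg]
    rcases Nat.lt_or_ge N n with hNlt | hNge
    · -- N < n : antihermitian prefix, trivial SOS 0
      have hnegc0 : -(starP c) ≠ 0 := fun h => hscne (neg_eq_zero.mp h)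
      have hBhom : IsHom ((n - N) + N) p' := isHom_cast (by omega) hp'hom
      have hChom : IsHom (N + (n - N)) (starP p') := isHom_cast (by omega) (isHom_starP hp'hom)
      have hDhom : IsHom N (-(starP c)) := isHom_neg (isHom_starP hchom)
      obtain ⟨E, hEhom, hp'E⟩ := levi hchom hBhom hChom hDhom hnegc0 hX
      have hE0 : E ≠ 0 := by
        intro h
        rw [h, mul_zero] at hp'E
        exact hp'0 (starP_eq_zero_iff.mp hp'E)
      have hp'eq : p' = starP E * starP c := by
        conv_lhs => rw [← starP_starP p', hp'E, starP_mul]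
      have hEanti : starP E + E = 0 := by
        have h2 : c * ((starP E + E) * starP c) = 0 := by
          calc c * ((starP E + E) * starP c)
              = c * (starP E * starP c) + (c * E) * starP c := by
                rw [add_mul, mul_add, mul_assoc]
            _ = c * p' + starP p' * starP c := by rw [← hp'eq, ← hp'E]
            _ = 0 := h3
        have h4 := hom_mul_left_cancel₀ hchom hc0 h2
        exact hom_mul_right_cancel₀ (isHom_starP hchom) hscne h4
      have hQhom : IsHom (n - N) (starP E) := isHom_starP hEhom
      have hQ0 : starP E ≠ 0 := fun h => hE0 (starP_eq_zero_iff.mp h)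
      have hprodQR : ps.prod = starP E * starP c := by rw [← hprod, hp'eq]
      obtain ⟨j, μ, hj1, hj2, hμ, hpre⟩ := prefixsplit ps hfac (by rw [← hprod]; exact hp'0)
        (n - N) N (starP E) (starP c) (by omega) hQhom hQ0 (isHom_starP hchom) hprodQR
      refine ⟨j, hj1, hj2, Or.inl ?_⟩
      rw [hpre, starP_smul, starP_starP, ← smul_add, hEanti, smul_zero]
      exact sos_zero
    · -- N ≥ n : reduction step
      have hBhom : IsHom ((N - n) + n) (-(starP c)) := isHom_cast (by omega)
        (isHom_neg (isHom_starP hchom))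
      have hChom : IsHom (n + (N - n)) c := isHom_cast (by omega) hchom
      obtain ⟨h₂, hh₂hom, hceq⟩ := levi (isHom_starP hp'hom) hBhom hChom hp'hom hp'0 hX.symm
      have hanti : h₂ + starP h₂ = 0 := by
        have h5 : starP p' * ((h₂ + starP h₂) * p') = 0 := by
          calc starP p' * ((h₂ + starP h₂) * p')
              = (starP p' * h₂) * p' + starP p' * (starP h₂ * p') := by
                rw [add_mul, mul_add, mul_assoc]
            _ = c * p' + starP p' * starP c := by
                rw [← hceq]
                congr 2
                rw [← starP_starP p', ← starP_mul, hceq]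
            _ = 0 := h3
        have h6 := hom_mul_left_cancel₀ (isHom_starP hp'hom)
          (fun h => hp'0 (starP_eq_zero_iff.mp h)) h5
        exact hom_mul_right_cancel₀ hp'hom hp'0 h6
      have hstar_h₂ : starP h₂ = -h₂ := by
        have := eq_neg_of_add_eq_zero_right hanti
        exact this
      set u₂ := u - starP p * h₂ with hu₂
      have hkey0 : (starP p * h₂) * p + starP ((starP p * h₂) * p) = 0 := by
        have hst : starP ((starP p * h₂) * p) = starP p * (starP h₂ * p) := by
          rw [starP_mul, starP_mul, starP_starP]
        rw [hst, hstar_h₂, neg_mul, mul_neg, ← mul_assoc]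
        exact add_neg_cancel _
      have hrep₂ : (∑ i, starP (b i) * b i) = u₂ * p + starP (u₂ * p) := by
        rw [hu₂, sub_mul, starP_sub]
        have habel : (u * p - (starP p * h₂) * p) + (starP (u * p) - starP ((starP p * h₂) * p))
            = (u * p + starP (u * p)) - ((starP p * h₂) * p + starP ((starP p * h₂) * p)) := by
          abel
        rw [habel, hkey0, sub_zero, hrep]
      have hcoefzero : ∀ w : Wd g, N ≤ len w → u₂ w = 0 := by
        intro w hw
        rw [hu₂, fsub_apply]
        have hdegsp : degLE (starP p * h₂) N := by
          have := degLE_mul (degLE_starP hdegLEp) hh₂hom.degLE'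
          intro v hv
          have := this v hv
          omega
        rcases Nat.lt_or_ge N (len w) with hgt | hge2
        · rw [apply_eq_zero_of_degLE hudegLE hgt, apply_eq_zero_of_degLE hdegsp hgt, sub_zero]
        · have hlw : len w = N := by omega
          have h7 : (starP p * h₂) w = (starP p' * h₂) w := by
            rw [coeff_mul_of_degLE (degLE_starP hdegLEp) hh₂hom.degLE'
                (show len w = n + (N - n) by omega),
              coeff_mul_of_degLE (degLE_starP hp'hom.degLE') hh₂hom.degLE'
                (show len w = n + (N - n) by omega)]
            congr 1
            rw [starP_apply, starP_apply, hp'coef _ (by rw [len_starWord, len_wtake]; omega)]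
          rw [h7, ← hceq, hccoef w hlw, sub_self]
      have hlt : deg u₂ < N := by
        rcases eq_or_ne u₂ 0 with h | h
        · have : deg u₂ = 0 := by rw [h]; simp [deg]
          omega
        · by_contra hcon
          push_neg at hcon
          obtain ⟨w, hwmem, hwlen⟩ := exists_word_deg h
          have := hcoefzero w (by omega)
          exact Finsupp.mem_support_iff.mp hwmem this
      exact ih (deg u₂) hlt u₂ rfl hrep₂
  · -- ENDGAME: N + n = d + d
    have hNn : N + n = d + d := by omega
    -- master identity
    have hBval : ∀ f f' : FreeStarAlg g, IsHom d f → IsHom d f' →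
        pair (c * p' + starP (c * p')) (starP f * f')
          = ∑ i, pair (b i) f * pair (b i) f' := by
      intro f f' hf hf'
      have hXhom : IsHom (d + d) (starP f * f') := isHom_mul (isHom_starP hf) hf'
      have step1 : pair (c * p' + starP (c * p')) (starP f * f')
          = pair (u * p + starP (u * p)) (starP f * f') := by
        apply pair_congr_left
        intro w hw
        exact COEQ' w (show len w = N + n by have := hXhom w hw; change len w = d + d at this; omega)
      have step2 : pair (u * p + starP (u * p)) (starP f * f')
          = ∑ i, pair (starP (b i) * b i) (starP f * f') := by
        rw [← hrep, pair_sum_left]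
      have step3 : ∀ i : Fin r, pair (starP (b i) * b i) (starP f * f')
          = pair (b i) f * pair (b i) f' := by
        intro i
        set β : FreeStarAlg g := MonoidAlgebra.ofCoeff (Finsupp.filter (fun w => len w = d) (b i).coeff) with hβ
        have hβhom : IsHom d β := isHom_filter_len d (b i)
        have hβcoef : ∀ w, len w = d → β w = b i w := fun w hw => filter_len_apply d (b i) hw
        have hcongr : pair (starP (b i) * b i) (starP f * f')
            = pair (starP β * β) (starP f * f') := by
          apply pair_congr_left
          intro w hw
          have hlw : len w = d + d := hXhom w hw
          rw [hsqcoef i w hlw,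
            coeff_mul_of_degLE (degLE_starP hβhom.degLE') hβhom.degLE' hlw, starP_apply,
            hβcoef _ (by rw [len_starWord, len_wtake]; omega),
            hβcoef _ (by rw [len_wdrop]; omega)]
        rw [hcongr, pair_mul_mul (isHom_starP hβhom) hβhom (isHom_starP hf) hf',
          pair_starP_starP]
        congr 1
        · exact pair_congr_left (fun w hw => hβcoef w (hf w hw))
        · exact pair_congr_left (fun w hw => hβcoef w (hf' w hw))
      rw [step1, step2]
      exact Finset.sum_congr rfl (fun i _ => step3 i)
    have hfull : ∀ X : FreeStarAlg g, pair (c * p' + starP (c * p')) X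
        = pair (c * p') X + pair (c * p') (starP X) := by
      intro X
      rw [pair_add_left, pair_starP_left]
    have hstarX : ∀ f f' : FreeStarAlg g, starP (starP f * f') = starP f' * f := by
      intro f f'
      rw [starP_mul, starP_starP]
    have hrearr : ∀ (z z' : Wd g) (φ φ' : FreeStarAlg g),
        starP (MonoidAlgebra.single z 1 * φ) * (MonoidAlgebra.single z' 1 * φ')
        = starP φ * (MonoidAlgebra.single (starWord z * z') 1 * φ') := by
      intro z z' φ φ'
      rw [starP_mul, starP_single, mul_assoc,
        ← mul_assoc (MonoidAlgebra.single (starWord z) (1:ℝ)),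
        MonoidAlgebra.single_mul_single, one_mul]
    rcases Nat.lt_or_ge N n with hNlt | hNge
    · -- ENDGAME with N < n : extract SOS prefix
      set e := d - N with he
      have he1 : 1 ≤ e := by omega
      have hde : d = e + N := by omega
      have hne2 : n = (e + e) + N := by omega
      set ψ₀ : FreeStarAlg g := (pair c c)⁻¹ • starP c with hψ₀
      have hψ₀hom : IsHom N ψ₀ := isHom_smul (isHom_starP hchom) _
      have hcc : pair c c ≠ 0 := ne_of_gt (pair_self_pos hc0)
      have hcψ₀ : pair c (starP ψ₀) = 1 := by
        rw [hψ₀, starP_smul, starP_starP, pair_smul_right, inv_mul_cancel₀ hcc]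
      have hscψ₀ : pair (starP c) ψ₀ = 1 := by
        rw [hψ₀, pair_smul_right, pair_starP_starP, inv_mul_cancel₀ hcc]
      have E2 : ∀ w : Wd g, len w = e + e → ∀ ψ' : FreeStarAlg g, IsHom N ψ' →
          pair (starP c) ψ' = 0 → pair p' (MonoidAlgebra.single w 1 * ψ') = 0 := by
        intro w hw ψ' hψ' horth
        set x := starWord (wtake e w) with hx
        set y := wdrop e w with hy
        have hxlen : len x = e := by rw [hx, len_starWord, len_wtake]; omega
        have hylen : len y = e := by rw [hy, len_wdrop]; omega
        have hswxy : starWord x * y = w := by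
          rw [hx, starWord_starWord, hy, wtake_mul_wdrop]
        set f : FreeStarAlg g := MonoidAlgebra.single x 1 * ψ₀ with hf
        set f' : FreeStarAlg g := MonoidAlgebra.single y 1 * ψ' with hf'
        have hfhom : IsHom d f := isHom_cast (by omega)
          (isHom_mul (isHom_cast hxlen (isHom_single x 1)) hψ₀hom)
        have hf'hom : IsHom d f' := isHom_cast (by omega)
          (isHom_mul (isHom_cast hylen (isHom_single y 1)) hψ')
        have hcpsw : ∀ (z : Wd g) (φ φ' : FreeStarAlg g), len z = e + e → IsHom N φ →
            IsHom N φ' →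
            pair (c * p') (starP φ * (MonoidAlgebra.single z 1 * φ'))
              = pair c (starP φ) * pair p' (MonoidAlgebra.single z 1 * φ') := by
          intro z φ φ' hz hφ hφ'
          exact pair_mul_mul hchom hp'hom (isHom_starP hφ)
            (isHom_cast hne2.symm (isHom_mul (isHom_cast hz (isHom_single z 1)) hφ'))
        have horthc : pair c (starP ψ') = 0 := by
          rw [← pair_starP_starP c (starP ψ'), starP_starP]
          exact horth
        have hzero' : ∀ i, pair (b i) f' = 0 := by
          have hval : pair (c * p' + starP (c * p')) (starP f' * f') = 0 := by
            rw [hfull, hstarX, hf', hrearr,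
              hcpsw (starWord y * y) ψ' ψ' (by rw [len_mul, len_starWord, hylen]) hψ' hψ',
              horthc]
            simp
          have hsq := hBval f' f' hf'hom hf'hom
          rw [hval] at hsq
          intro i
          have hterm := (Finset.sum_eq_zero_iff_of_nonneg
            (fun i _ => mul_self_nonneg (pair (b i) f'))).mp hsq.symm i (Finset.mem_univ i)
          exact mul_self_eq_zero.mp hterm
        have hBzero : pair (c * p' + starP (c * p')) (starP f * f') = 0 := by
          rw [hBval f f' hfhom hf'hom]
          exact Finset.sum_eq_zero (fun i _ => by rw [hzero' i, mul_zero])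
        have hexpand : pair (c * p' + starP (c * p')) (starP f * f')
            = pair p' (MonoidAlgebra.single w 1 * ψ') := by
          rw [hfull, hstarX, hf, hf', hrearr, hrearr,
            hcpsw (starWord x * y) ψ₀ ψ' (by rw [len_mul, len_starWord, hxlen, hylen]) hψ₀hom hψ',
            hcpsw (starWord y * x) ψ' ψ₀ (by rw [len_mul, len_starWord, hxlen, hylen]) hψ' hψ₀hom,
            hcψ₀, one_mul, horthc, zero_mul, add_zero, hswxy]
        rw [← hexpand, hBzero]
      have hp'cast : IsHom ((e + e) + N) p' := isHom_cast hne2 hp'hom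
      obtain ⟨Q, hQhom, hp'Q⟩ := recon hp'cast (isHom_starP hchom) hscne E2
      have hQ0 : Q ≠ 0 := fun h => hp'0 (by rw [hp'Q, h, zero_mul])
      have hτhom : IsHom (e + e) (Q + starP Q) := isHom_add hQhom (isHom_starP hQhom)
      have hτherm : starP (Q + starP Q) = Q + starP Q := by
        rw [starP_add, starP_starP, add_comm]
      have hτpsd : ∀ φ, IsHom e φ → 0 ≤ pair (Q + starP Q) (starP φ * φ) := by
        intro φ hφ
        set f : FreeStarAlg g := φ * ψ₀ with hf
        have hfhom : IsHom d f := isHom_cast (by omega) (isHom_mul hφ hψ₀hom)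
        have hsum := hBval f f hfhom hfhom
        have hX : starP f * f = starP ψ₀ * ((starP φ * φ) * ψ₀) := by
          rw [hf, starP_mul, mul_assoc, ← mul_assoc (starP φ)]
        have hCP : pair (c * p') (starP f * f) = pair Q (starP φ * φ) := by
          rw [hX, pair_mul_mul hchom hp'cast (isHom_starP hψ₀hom)
              (isHom_mul (isHom_mul (isHom_starP hφ) hφ) hψ₀hom),
            hcψ₀, one_mul, hp'Q,
            pair_mul_mul hQhom (isHom_starP hchom) (isHom_mul (isHom_starP hφ) hφ) hψ₀hom,
            hscψ₀, mul_one]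
        have htot : pair (c * p' + starP (c * p')) (starP f * f)
            = pair Q (starP φ * φ) + pair Q (starP φ * φ) := by
          rw [hfull, hstarX, hCP]
        have hpos : 0 ≤ pair Q (starP φ * φ) + pair Q (starP φ * φ) := by
          rw [← htot, hsum]
          exact Finset.sum_nonneg (fun i _ => mul_self_nonneg _)
        have hτval : pair (Q + starP Q) (starP φ * φ)
            = pair Q (starP φ * φ) + pair Q (starP φ * φ) := by
          rw [pair_add_left, pair_starP_left, hstarX]
        rw [hτval]
        exact hpos
      have hsos : IsSOS (Q + starP Q) := sos_of_psd hτhom hτherm hτpsd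
      obtain ⟨j, μ, hj1, hj2, hμ, hpre⟩ := prefixsplit ps hfac (by rw [← hprod]; exact hp'0)
        (e + e) N Q (starP c) (by omega) hQhom hQ0 (isHom_starP hchom)
        (by rw [← hprod, hp'Q])
      have hTsum : (ps.take j).prod + starP (ps.take j).prod = μ • (Q + starP Q) := by
        rw [hpre, starP_smul, ← smul_add]
      rcases lt_or_gt_of_ne hμ with hneg | hpos
      · refine ⟨j, hj1, hj2, Or.inr ?_⟩
        rw [hTsum, ← neg_smul]
        exact sos_smul_pos (by linarith) hsos
      · refine ⟨j, hj1, hj2, Or.inl ?_⟩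
        rw [hTsum]
        exact sos_smul_pos hpos hsos
    · -- ENDGAME with N ≥ n : contradiction with minimality
      exfalso
      set k := d - n with hk
      have hdk : d = k + n := by omega
      have hNk : N = (k + k) + n := by omega
      have E2' : ∀ v₁ : Wd g, len v₁ = k → ∀ ψ' : FreeStarAlg g, IsHom n ψ' →
          pair p' ψ' = 0 → ∀ i, pair (b i) (MonoidAlgebra.single v₁ 1 * ψ') = 0 := by
        intro v₁ hv₁ ψ' hψ' horth i
        set f' : FreeStarAlg g := MonoidAlgebra.single v₁ 1 * ψ' with hf'
        have hf'hom : IsHom d f' := isHom_cast (by omega)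
          (isHom_mul (isHom_cast hv₁ (isHom_single v₁ 1)) hψ')
        have hval : pair (c * p' + starP (c * p')) (starP f' * f') = 0 := by
          have hXeq : starP f' * f'
              = (starP ψ' * MonoidAlgebra.single (starWord v₁ * v₁) 1) * ψ' := by
            rw [hf', hrearr, ← mul_assoc]
          rw [hfull, hstarX, hXeq,
            pair_mul_mul (f := c) (h := p') hchom hp'hom
              (isHom_cast (show n + (k + k) = N by omega)
                (isHom_mul (isHom_starP hψ')
                  (isHom_cast (by rw [len_mul, len_starWord, hv₁]) (isHom_single _ 1))))
              hψ',
            horth]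
          simp
        have hsq := hBval f' f' hf'hom hf'hom
        rw [hval] at hsq
        have hterm := (Finset.sum_eq_zero_iff_of_nonneg
          (fun i _ => mul_self_nonneg (pair (b i) f'))).mp hsq.symm i (Finset.mem_univ i)
        exact mul_self_eq_zero.mp hterm
      set β : FreeStarAlg g := MonoidAlgebra.ofCoeff (Finsupp.filter (fun w => len w = d) (b i').coeff) with hβ
      have hβhom : IsHom d β := isHom_filter_len d (b i')
      have hβcoef : ∀ w, len w = d → β w = b i' w := fun w hw => filter_len_apply d (b i') hw
      have Hrec : ∀ w : Wd g, len w = k → ∀ ψ' : FreeStarAlg g, IsHom n ψ' →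
          pair p' ψ' = 0 → pair β (MonoidAlgebra.single w 1 * ψ') = 0 := by
        intro w hw ψ' hψ' horth
        have hmulhom : IsHom d (MonoidAlgebra.single w 1 * ψ') := isHom_cast (by omega)
          (isHom_mul (isHom_cast hw (isHom_single w 1)) hψ')
        have : pair β (MonoidAlgebra.single w 1 * ψ')
            = pair (b i') (MonoidAlgebra.single w 1 * ψ') :=
          pair_congr_left (fun v hv => hβcoef v (hmulhom v hv))
        rw [this]
        exact E2' w hw ψ' hψ' horth i'
      obtain ⟨γ, hγhom, hβγ⟩ := recon (isHom_cast hdk hβhom) hp'hom hp'0 Hrec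
      obtain ⟨w, hwlen, hwne⟩ := hmin i' γ hi'0 (by omega)
        (isHom_cast (show k = deg (b i') - n by omega) hγhom)
      apply hwne
      rw [← hβγ]
      exact (hβcoef w (by rw [hwlen, hi'd])).symm

end FreeStarAlg
namespace FreeStarAlg

variable {g : ℕ}

local instance : DecidableEq (FreeMonoid (Fin g ⊕ Fin g)) := Classical.decEq _

theorem stmt19' (p p' : FreeStarAlg g)
    (hp'hom : IsHom (deg p) p')
    (hp'coef : ∀ w : FreeMonoid (Fin g ⊕ Fin g),
      (FreeMonoid.toList w).length = deg p → p' w = p w)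
    (ps : List (FreeStarAlg g))
    (hfac : ∀ q ∈ ps, Irred q ∧ ∃ d, IsHom d q)
    (hprod : p' = ps.prod)
    (hnr : ¬ IsRealIdeal (leftIdealGen {p})) :
    ∃ j, 1 ≤ j ∧ j ≤ ps.length ∧
      (IsSOS ((ps.take j).prod + starP (ps.take j).prod) ∨
       IsSOS (-((ps.take j).prod + starP (ps.take j).prod))) := by
  classical
  set I := leftIdealGen {p} with hI
  have hmemI : ∀ x : FreeStarAlg g, x ∈ I ↔ ∃ f, x = f * p := by
    intro x
    rw [hI, leftIdealGen, Submodule.mem_span_singleton]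
    constructor
    · rintro ⟨c, rfl⟩; exact ⟨c, rfl⟩
    · rintro ⟨f, rfl⟩; exact ⟨f, rfl⟩
  by_cases hp'0 : p' = 0
  · have hpsne : ps ≠ [] := by
      intro h
      rw [h, List.prod_nil, hp'0] at hprod
      exact one_ne_zero (α := FreeStarAlg g) hprod.symm
    refine ⟨ps.length, ?_, le_rfl, Or.inl ?_⟩
    · exact Nat.one_le_iff_ne_zero.mpr (fun h => hpsne (List.length_eq_zero_iff.mp h))
    · rw [List.take_length, ← hprod, hp'0, starP_zero, add_zero]
      exact sos_zero
  have hp0 : p ≠ 0 := by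
    intro h
    apply hp'0
    ext w
    simp only [fzero_apply, Finsupp.coe_zero, Pi.zero_apply]
    by_cases hw : (FreeMonoid.toList w).length = deg p
    · rw [hp'coef w hw, h]; rfl
    · exact hp'hom.apply_ne hw
  have hn1 : 1 ≤ deg p := by
    by_contra hcon
    push_neg at hcon
    have hdeg0 : deg p = 0 := by omega
    apply hnr
    intro r a _ i
    have hph : IsHom 0 p := by
      intro w hw
      have h1 := degLE_deg p w hw
      change len w ≤ deg p at h1
      change len w = 0
      omega
    obtain ⟨cc, hcc⟩ : ∃ cc : ℝ, p 1 = cc := ⟨_, rfl⟩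
    have hpsc : p = MonoidAlgebra.single 1 cc := by
      rw [← hcc]; exact isHom_zero_scalar hph
    have hpc : cc ≠ 0 := by
      intro h
      exact hp0 (by rw [hpsc, h]; exact MonoidAlgebra.single_zero _)
    refine (hmemI (a i)).mpr ⟨cc⁻¹ • a i, ?_⟩
    have h2 : (cc⁻¹ • a i) * p = a i := by
      conv_lhs => rw [hpsc]
      rw [mul_scalar_single, smul_smul, mul_inv_cancel₀ hpc, one_smul]
    exact h2.symm
  rw [IsRealIdeal] at hnr
  push_neg at hnr
  obtain ⟨r, a, hmem, i₀, hi₀⟩ := hnr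
  -- minimal-degree coset representatives
  have hex : ∀ i : Fin r, ∃ M : ℕ, ∃ bb : FreeStarAlg g, (a i - bb) ∈ I ∧ deg bb = M :=
    fun i => ⟨deg (a i), a i, by rw [sub_self]; exact Submodule.zero_mem I, rfl⟩
  set b : Fin r → FreeStarAlg g := fun i => Classical.choose (Nat.find_spec (hex i)) with hbdef
  have hbspec : ∀ i, (a i - b i) ∈ I ∧ deg (b i) = Nat.find (hex i) :=
    fun i => Classical.choose_spec (Nat.find_spec (hex i))
  have hbmin : ∀ i (b' : FreeStarAlg g), (a i - b') ∈ I → deg (b i) ≤ deg b' := by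
    intro i b' hb'
    rw [(hbspec i).2]
    exact Nat.find_le ⟨b', hb', rfl⟩
  have hb0 : b i₀ ≠ 0 := by
    intro h
    apply hi₀
    have := (hbspec i₀).1
    rwa [h, sub_zero] at this
  -- minimality in the form needed
  have hminP : ∀ i (γ : FreeStarAlg g), b i ≠ 0 → deg p ≤ deg (b i) →
      IsHom (deg (b i) - deg p) γ → ∃ w : Wd g, len w = deg (b i) ∧
        b i w ≠ (γ * p') w := by
    intro i γ hbi hnle hγ
    by_contra hcon
    push_neg at hcon
    have hmem2 : γ * p ∈ I := (hmemI _).mpr ⟨γ, rfl⟩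
    have hcoset : (a i - (b i - γ * p)) ∈ I := by
      have h1 : a i - (b i - γ * p) = (a i - b i) + γ * p := by abel
      rw [h1]
      exact Submodule.add_mem I (hbspec i).1 hmem2
    have hgpLE : degLE (γ * p) (deg (b i)) := by
      have h2 := degLE_mul hγ.degLE' (degLE_deg p)
      intro w hw
      have := h2 w hw
      omega
    have hlt : ∀ w : Wd g, deg (b i) ≤ len w → (b i - γ * p) w = 0 := by
      intro w hw
      rw [fsub_apply]
      rcases Nat.lt_or_ge (deg (b i)) (len w) with h2 | h2
      · rw [apply_eq_zero_of_degLE (degLE_deg (b i)) h2,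
          apply_eq_zero_of_degLE hgpLE h2, sub_zero]
      · have hlw : len w = deg (b i) := by omega
        have h3 : (γ * p) w = (γ * p') w := by
          rw [coeff_mul_of_degLE hγ.degLE' (degLE_deg p)
              (show len w = (deg (b i) - deg p) + deg p by omega),
            coeff_mul_of_degLE hγ.degLE' hp'hom.degLE'
              (show len w = (deg (b i) - deg p) + deg p by omega),
            hp'coef _ (by
              have h9 : len (wdrop (deg (b i) - deg p) w) = deg p := by
                rw [len_wdrop]; omega
              exact h9)]
        rw [h3, ← hcon w hlw, sub_self]
    have hdlt : deg (b i - γ * p) < deg (b i) := by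
      rcases eq_or_ne (b i - γ * p) 0 with h | h
      · rw [h]
        have h4 : deg (0 : FreeStarAlg g) = 0 := by simp [deg]
        omega
      · by_contra h4
        push_neg at h4
        obtain ⟨w, hwmem, hwl⟩ := exists_word_deg h
        exact Finsupp.mem_support_iff.mp hwmem (hlt w (by omega))
    exact absurd (hbmin i _ hcoset) (by omega)
  -- symmetric ideal representation
  obtain ⟨W₁, hW₁, W₂, hW₂, hsum⟩ := hmem
  obtain ⟨f₁, hf₁⟩ := (hmemI W₁).mp hW₁
  obtain ⟨f₂, hf₂⟩ := (hmemI W₂).mp hW₂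
  have hgg : ∀ i, ∃ gq : FreeStarAlg g, a i - b i = gq * p := fun i => (hmemI _).mp (hbspec i).1
  set gg : Fin r → FreeStarAlg g := fun i => Classical.choose (hgg i) with hggdef
  have hggspec : ∀ i, a i - b i = gg i * p := fun i => Classical.choose_spec (hgg i)
  have hbi : ∀ i, b i = a i - gg i * p := by
    intro i
    have h := hggspec i
    rw [← h]
    abel
  have hkey : (∑ i, starP (b i) * b i)
      = (f₁ - (∑ i, starP (a i) * gg i) + (∑ i, starP (gg i * p) * gg i)) * p
        + starP ((f₂ - (∑ i, starP (a i) * gg i)) * p) := by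
    have hper : ∀ i, starP (b i) * b i
        = starP (a i) * a i - starP (a i) * (gg i * p)
          - starP (starP (a i) * (gg i * p)) + starP (gg i * p) * (gg i * p) := by
      intro i
      have hx : starP (starP (a i) * (gg i * p)) = starP (gg i * p) * a i := by
        rw [starP_mul, starP_starP]
      rw [hbi i, starP_sub, sub_mul, mul_sub, mul_sub, hx]
      abel
    rw [Finset.sum_congr rfl (fun i _ => hper i)]
    have hsplit : ∑ i, (starP (a i) * a i - starP (a i) * (gg i * p)
          - starP (starP (a i) * (gg i * p)) + starP (gg i * p) * (gg i * p))
        = (∑ i, starP (a i) * a i) - (∑ i, starP (a i) * (gg i * p))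
          - (∑ i, starP (starP (a i) * (gg i * p))) + (∑ i, starP (gg i * p) * (gg i * p)) := by
      rw [Finset.sum_add_distrib, Finset.sum_sub_distrib, Finset.sum_sub_distrib]
    rw [hsplit, hsum, hf₁, hf₂, ← starP_sum]
    have hA₁ : (∑ i, starP (a i) * (gg i * p)) = (∑ i, starP (a i) * gg i) * p := by
      rw [Finset.sum_mul]
      exact Finset.sum_congr rfl (fun i _ => (mul_assoc _ _ _).symm)
    have hA₃ : (∑ i, starP (gg i * p) * (gg i * p)) = (∑ i, starP (gg i * p) * gg i) * p := by
      rw [Finset.sum_mul]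
      exact Finset.sum_congr rfl (fun i _ => (mul_assoc _ _ _).symm)
    rw [hA₁, hA₃]
    rw [sub_mul, add_mul, sub_mul, starP_sub]
    rw [starP_mul ((∑ i, starP (a i) * gg i)) p]
    rw [starP_mul f₂ p]
    have : starP p * starP (∑ i, starP (a i) * gg i) = starP ((∑ i, starP (a i) * gg i) * p) := by
      rw [starP_mul]
    rw [this]
    abel
  have hherm : starP (∑ i, starP (b i) * b i) = ∑ i, starP (b i) * b i := by
    rw [starP_sum]
    exact Finset.sum_congr rfl (fun i _ => starP_herm_sq (b i))
  set F := f₁ - (∑ i, starP (a i) * gg i) + (∑ i, starP (gg i * p) * gg i) with hF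
  set G := f₂ - (∑ i, starP (a i) * gg i) with hG
  set u := (2⁻¹ : ℝ) • (F + G) with hu
  have hrep : (∑ i, starP (b i) * b i) = u * p + starP (u * p) := by
    have h1 : (∑ i, starP (b i) * b i) = F * p + starP (G * p) := hkey
    have h2 : (∑ i, starP (b i) * b i) = G * p + starP (F * p) := by
      conv_lhs => rw [← hherm]
      rw [h1, starP_add, starP_starP, add_comm]
    rw [hu, smul_mul_assoc, starP_smul, ← smul_add, add_mul, starP_add]
    have h3 : F * p + G * p + (starP (F * p) + starP (G * p))
        = (F * p + starP (G * p)) + (G * p + starP (F * p)) := by abel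
    rw [h3, ← h1, ← h2, ← two_smul ℝ (∑ i, starP (b i) * b i), smul_smul]
    norm_num
  exact main_ind p p' (deg p) hn1 (degLE_deg p) hp'hom hp'coef hp'0 ps hfac hprod
    r b i₀ hb0 hminP (deg u) u rfl hrep

end FreeStarAlg

open FreeStarAlg

/-- Let `p'` be the leading (highest-degree homogeneous) part of `p`
and `p' = p₁ ⋯ p_k` a factorization into irreducible homogeneous factors. If the
left ideal generated by `p` is not real, then for some `j`, `±(p₁⋯p_j + p_j*⋯p₁*)`
is a sum of squares. -/
theorem stmt19 {g : ℕ} (p p' : FreeStarAlg g)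
    (hp'hom : IsHom (deg p) p')
    (hp'coef : ∀ w : FreeMonoid (Fin g ⊕ Fin g),
      (FreeMonoid.toList w).length = deg p → p' w = p w)
    (ps : List (FreeStarAlg g))
    (hfac : ∀ q ∈ ps, Irred q ∧ ∃ d, IsHom d q)
    (hprod : p' = ps.prod)
    (hnr : ¬ IsRealIdeal (leftIdealGen {p})) :
    ∃ j, 1 ≤ j ∧ j ≤ ps.length ∧
      (IsSOS ((ps.take j).prod + starP (ps.take j).prod) ∨
       IsSOS (-((ps.take j).prod + starP (ps.take j).prod))) := by
  exact stmt19' p p' hp'hom hp'coef ps hfac hprod hnr
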